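/- arXiv:2309.05554 — 2 statements merged into one kernel-verified Lean document; each statement's English description precedes it below -/
import Mathlib

section
/- Upper-tail read-k bound for supermodular functions under 1-negative association: Let X_1,...,X_m be {0,1}-valued 1-negatively associated random variables, and f_j : {0,1}^{P_j} → [0,1] for j ∈ [n] monotone non-decreasing supermodular functions forming a read-k family. Let X_1*,...,X_m* be independent with the same marginals and p_0 = (1/n)·Σ_j E[f_j(X*_{P_j})]. Then for every ε > 0 with p_0 + ε ≤ 1, Pr[Σ_{j=1}^n f_j(X_{P_j}) ≥ (p_0+ε)n] ≤ exp(−D(p_0+ε ∥ p_0)·n/k). -/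
open MeasureTheory ProbabilityTheory Real Finset

/-- A vector is binary if each coordinate is 0 or 1. -/
def BinaryVec {m : ℕ} (x : Fin m → ℝ) : Prop := ∀ i, x i = 0 ∨ x i = 1

/-- Monotone non-decreasing on the Boolean cube. -/
def MonoCube {m : ℕ} (f : (Fin m → ℝ) → ℝ) : Prop :=
  ∀ x y : Fin m → ℝ, BinaryVec x → BinaryVec y → x ≤ y → f x ≤ f y

/-- Submodular on the Boolean cube: marginal gains are coordinatewise non-increasing. -/
def SubmodCube {m : ℕ} (f : (Fin m → ℝ) → ℝ) : Prop :=
  ∀ (i : Fin m) (x y : Fin m → ℝ), BinaryVec x → BinaryVec y → x ≤ y →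
    f (Function.update y i 1) - f (Function.update y i 0) ≤
      f (Function.update x i 1) - f (Function.update x i 0)

/-- Supermodular on the Boolean cube: marginal gains are coordinatewise non-decreasing. -/
def SupermodCube {m : ℕ} (f : (Fin m → ℝ) → ℝ) : Prop :=
  ∀ (i : Fin m) (x y : Fin m → ℝ), BinaryVec x → BinaryVec y → x ≤ y →
    f (Function.update x i 1) - f (Function.update x i 0) ≤
      f (Function.update y i 1) - f (Function.update y i 0)

/-- 1-negative association for binary random variables: for every coordinate `i`,
every monotone `F` depending only on coordinates `≠ i` and every monotone `G` of `X i`,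
`E[F·G] ≤ E[F]·E[G]`. -/
def OneNA {Ω : Type*} [MeasurableSpace Ω] (μ : Measure Ω) {m : ℕ} (X : Fin m → Ω → ℝ) : Prop :=
  ∀ (i : Fin m) (F : (Fin m → ℝ) → ℝ) (G : ℝ → ℝ),
    Measurable F → MonoCube F →
    (∀ x y : Fin m → ℝ, (∀ j, j ≠ i → x j = y j) → F x = F y) →
    Measurable G → Monotone G →
    ∫ ω, F (fun j => X j ω) * G (X i ω) ∂μ ≤
      (∫ ω, F (fun j => X j ω) ∂μ) * ∫ ω, G (X i ω) ∂μ

/-- Binary Kullback–Leibler divergence. -/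
noncomputable def klBin (p q : ℝ) : ℝ :=
  p * Real.log (p / q) + (1 - p) * Real.log ((1 - p) / (1 - q))

namespace ReadKAux

variable {m : ℕ}

/-- `h` ignores coordinate `i`. -/
def Ign (i : Fin m) (h : (Fin m → ℝ) → ℝ) : Prop :=
  ∀ x v, h (Function.update x i v) = h x

lemma Ign.comp {i : Fin m} {h : (Fin m → ℝ) → ℝ} (hI : Ign i h) (φ : ℝ → ℝ) :
    Ign i (fun x => φ (h x)) := fun x v => by simp [hI x v]

lemma Ign.of_eq_on {i : Fin m} {h : (Fin m → ℝ) → ℝ}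
    (H : ∀ x y : Fin m → ℝ, (∀ j, j ≠ i → x j = y j) → h x = h y) : Ign i h := by
  intro x v
  exact H _ _ (fun j hj => Function.update_of_ne hj _ _)

lemma binary_update {x : Fin m → ℝ} (hx : BinaryVec x) {c : ℝ} (hc : c = 0 ∨ c = 1)
    (i : Fin m) : BinaryVec (Function.update x i c) := by
  intro j
  rcases eq_or_ne j i with rfl | hji
  · simpa using hc
  · simpa [Function.update_of_ne hji] using hx j

lemma update_le_update {x y : Fin m → ℝ} (hxy : x ≤ y) (i : Fin m) (c : ℝ) :
    Function.update x i c ≤ Function.update y i c := by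
  intro j
  rcases eq_or_ne j i with rfl | hji
  · simp
  · simpa [Function.update_of_ne hji] using hxy j

lemma update_zero_le_update_one (x : Fin m → ℝ) (i : Fin m) :
    Function.update x i (0:ℝ) ≤ Function.update x i 1 := by
  intro j
  rcases eq_or_ne j i with rfl | hji
  · simp
  · simp [Function.update_of_ne hji]

lemma exists_bool_rep {x : Fin m → ℝ} (hx : BinaryVec x) :
    ∃ s : Fin m → Bool, x = fun i => if s i then (1:ℝ) else 0 := by
  refine ⟨fun i => decide (x i = 1), funext fun i => ?_⟩
  rcases hx i with h | h <;> simp [h]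

lemma bounded_cube (h : (Fin m → ℝ) → ℝ) :
    ∃ C : ℝ, ∀ x, BinaryVec x → |h x| ≤ C := by
  refine ⟨∑ s : Fin m → Bool, |h (fun i => if s i then (1:ℝ) else 0)|, fun x hx => ?_⟩
  obtain ⟨s, rfl⟩ := exists_bool_rep hx
  exact Finset.single_le_sum (f := fun s : Fin m → Bool =>
    |h (fun i => if s i then (1:ℝ) else 0)|) (fun _ _ => abs_nonneg _) (Finset.mem_univ s)

lemma measurable_comp_update {h : (Fin m → ℝ) → ℝ} (hh : Measurable h) (i : Fin m) (c : ℝ) :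
    Measurable fun x => h (Function.update x i c) :=
  hh.comp measurable_update_left

/-- All-coordinate-ignoring functions are constant. -/
lemma ign_all_const {h : (Fin m → ℝ) → ℝ} (hI : ∀ i, Ign i h) (x y : Fin m → ℝ) :
    h x = h y := by
  have key : ∀ (l : List (Fin m)) (x y : Fin m → ℝ), (∀ j, j ∈ l ∨ x j = y j) → h x = h y := by
    intro l
    induction l with
    | nil =>
      intro x y hxy
      have : x = y := funext fun j => (hxy j).resolve_left (by simp)
      rw [this]
    | cons i l ih =>
      intro x y hxy
      have h1 : h x = h (Function.update x i (y i)) := (hI i x (y i)).symm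
      rw [h1]
      refine ih _ _ fun j => ?_
      rcases eq_or_ne j i with rfl | hji
      · exact Or.inr (by simp)
      · rcases hxy j with hj | hj
        · rcases List.mem_cons.1 hj with rfl | hj
          · exact absurd rfl hji
          · exact Or.inl hj
        · exact Or.inr (by simpa [Function.update_of_ne hji] using hj)
  exact key (List.finRange m) x y fun j => Or.inl (List.mem_finRange j)

/-! ### The averaging operator -/

def Tav (q : ℝ) (i : Fin m) (h : (Fin m → ℝ) → ℝ) : (Fin m → ℝ) → ℝ :=
  fun x => (1 - q) * h (Function.update x i 0) + q * h (Function.update x i 1)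

lemma Tav_apply' (q : ℝ) (i : Fin m) (h : (Fin m → ℝ) → ℝ) (x : Fin m → ℝ) :
    Tav q i h x = h (Function.update x i 0)
      + q * (h (Function.update x i 1) - h (Function.update x i 0)) := by
  simp only [Tav]; ring

lemma Tav_measurable {q : ℝ} {i : Fin m} {h : (Fin m → ℝ) → ℝ} (hh : Measurable h) :
    Measurable (Tav q i h) :=
  (((measurable_comp_update hh i 0).const_mul _).add
    ((measurable_comp_update hh i 1).const_mul _))

lemma Tav_ign_self (q : ℝ) (i : Fin m) (h : (Fin m → ℝ) → ℝ) : Ign i (Tav q i h) := by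
  intro x v
  simp [Tav, Function.update_idem]

lemma Tav_ign {j : Fin m} {h : (Fin m → ℝ) → ℝ} (hI : Ign j h) (q : ℝ) (i : Fin m) :
    Ign j (Tav q i h) := by
  rcases eq_or_ne j i with rfl | hji
  · exact Tav_ign_self q j h
  · intro x v
    simp only [Tav]
    rw [Function.update_comm hji, Function.update_comm hji, hI, hI]

lemma Tav_nonneg {q : ℝ} (hq0 : 0 ≤ q) (hq1 : q ≤ 1) {h : (Fin m → ℝ) → ℝ}
    (hh : ∀ x, 0 ≤ h x) (i : Fin m) (x : Fin m → ℝ) : 0 ≤ Tav q i h x :=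
  add_nonneg (mul_nonneg (by linarith) (hh _)) (mul_nonneg hq0 (hh _))

lemma Tav_mono {q : ℝ} (hq0 : 0 ≤ q) (hq1 : q ≤ 1) {i : Fin m} {h : (Fin m → ℝ) → ℝ}
    (hh : MonoCube h) : MonoCube (Tav q i h) := by
  intro x y hx hy hxy
  have h0 := hh _ _ (binary_update hx (Or.inl rfl) i) (binary_update hy (Or.inl rfl) i)
    (update_le_update hxy i 0)
  have h1 := hh _ _ (binary_update hx (Or.inr rfl) i) (binary_update hy (Or.inr rfl) i)
    (update_le_update hxy i 1)
  exact add_le_add (mul_le_mul_of_nonneg_left h0 (by linarith))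
    (mul_le_mul_of_nonneg_left h1 hq0)

lemma Tav_supermod {q : ℝ} (hq0 : 0 ≤ q) (hq1 : q ≤ 1) {i : Fin m} {h : (Fin m → ℝ) → ℝ}
    (hh : SupermodCube h) : SupermodCube (Tav q i h) := by
  intro i' x y hx hy hxy
  rcases eq_or_ne i' i with rfl | hii
  · rw [Tav_ign_self q i' h, Tav_ign_self q i' h, Tav_ign_self q i' h, Tav_ign_self q i' h]
    simp
  · have key : ∀ z : Fin m → ℝ,
        Tav q i h (Function.update z i' 1) - Tav q i h (Function.update z i' 0)
        = (1 - q) * (h (Function.update (Function.update z i 0) i' 1)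
            - h (Function.update (Function.update z i 0) i' 0))
          + q * (h (Function.update (Function.update z i 1) i' 1)
            - h (Function.update (Function.update z i 1) i' 0)) := by
      intro z
      simp only [Tav]
      rw [Function.update_comm hii, Function.update_comm hii, Function.update_comm hii,
        Function.update_comm hii]
      ring
    rw [key x, key y]
    have h0 := hh i' _ _ (binary_update hx (Or.inl rfl) i) (binary_update hy (Or.inl rfl) i)
      (update_le_update hxy i 0)
    have h1 := hh i' _ _ (binary_update hx (Or.inr rfl) i) (binary_update hy (Or.inr rfl) i)
      (update_le_update hxy i 1)
    exact add_le_add (mul_le_mul_of_nonneg_left h0 (by linarith))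
      (mul_le_mul_of_nonneg_left h1 hq0)

end ReadKAux

namespace ReadKAux

/-- Padded AM-GM: weights may sum to at most one. -/
lemma gm_pad {α : Type*} (J : Finset α) (w z : α → ℝ) (hw : ∀ j ∈ J, 0 ≤ w j)
    (hw1 : ∑ j ∈ J, w j ≤ 1) (hz : ∀ j ∈ J, 0 ≤ z j) :
    ∏ j ∈ J, z j ^ (w j) ≤ 1 - ∑ j ∈ J, w j + ∑ j ∈ J, w j * z j := by
  classical
  set s' : Finset (Option α) := insert none (J.map Function.Embedding.some) with hs'
  have hnone : (none : Option α) ∉ J.map Function.Embedding.some := by simp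
  set w' : Option α → ℝ := fun o => o.elim (1 - ∑ j ∈ J, w j) w with hw'
  set z' : Option α → ℝ := fun o => o.elim 1 z with hz'
  have hsum : ∑ o ∈ s', w' o = 1 := by
    rw [hs', Finset.sum_insert hnone, Finset.sum_map]
    simp only [hw', Function.Embedding.some_apply, Option.elim]
    ring
  have key := Real.geom_mean_le_arith_mean_weighted s' w' z' ?_ hsum ?_
  · rw [hs', Finset.prod_insert hnone, Finset.sum_insert hnone, Finset.prod_map,
      Finset.sum_map] at key
    simp only [hw', hz', Function.Embedding.some_apply, Option.elim, Real.one_rpow,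
      one_mul, mul_one] at key
    linarith
  · rintro (_ | j) ho
    · simp only [hw', Option.elim]
      linarith
    · have : j ∈ J := by simpa [hs'] using ho
      simpa [hw'] using hw j this
  · rintro (_ | j) ho
    · simp [hz']
    · have : j ∈ J := by simpa [hs'] using ho
      simpa [hz'] using hz j this

/-- Two-point generalized Hölder inequality for at most `k` functions with exponent `k`. -/
lemma holder_two {α : Type*} (k : ℕ) (hk : 0 < k) (J : Finset α) (hJ : J.card ≤ k)
    (p : ℝ) (hp0 : 0 ≤ p) (hp1 : p ≤ 1) (a b : α → ℝ) (ha : ∀ j, 0 ≤ a j)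
    (hb : ∀ j, 0 ≤ b j) :
    (1 - p) * ∏ j ∈ J, a j + p * ∏ j ∈ J, b j ≤
      ∏ j ∈ J, ((1 - p) * a j ^ k + p * b j ^ k) ^ ((k:ℝ)⁻¹) := by
  classical
  set c : α → ℝ := fun j => (1 - p) * a j ^ k + p * b j ^ k with hc
  have hcnn : ∀ j, 0 ≤ c j := fun j =>
    add_nonneg (mul_nonneg (by linarith) (pow_nonneg (ha j) k))
      (mul_nonneg hp0 (pow_nonneg (hb j) k))
  by_cases hzero : ∃ j ∈ J, c j = 0
  · obtain ⟨j0, hj0J, hj0⟩ := hzero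
    have hrhs : ∏ j ∈ J, (c j) ^ ((k:ℝ)⁻¹) = 0 := by
      apply Finset.prod_eq_zero hj0J
      rw [hj0]
      exact Real.zero_rpow (by positivity)
    rw [hrhs]
    have hnn1 : 0 ≤ (1 - p) * a j0 ^ k := mul_nonneg (by linarith) (pow_nonneg (ha j0) k)
    have hnn2 : 0 ≤ p * b j0 ^ k := mul_nonneg hp0 (pow_nonneg (hb j0) k)
    have e : (1 - p) * a j0 ^ k + p * b j0 ^ k = 0 := hj0
    have h1 : (1 - p) * a j0 ^ k = 0 ∧ p * b j0 ^ k = 0 := ⟨by linarith, by linarith⟩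
    have hA : (1 - p) * ∏ j ∈ J, a j = 0 := by
      rcases mul_eq_zero.1 h1.1 with h | h
      · rw [h, zero_mul]
      · rw [Finset.prod_eq_zero hj0J (pow_eq_zero_iff hk.ne' |>.1 h), mul_zero]
    have hB : p * ∏ j ∈ J, b j = 0 := by
      rcases mul_eq_zero.1 h1.2 with h | h
      · rw [h, zero_mul]
      · rw [Finset.prod_eq_zero hj0J (pow_eq_zero_iff hk.ne' |>.1 h), mul_zero]
    rw [hA, hB]; simp
  · push_neg at hzero
    have hcpos : ∀ j ∈ J, 0 < c j := fun j hj => (hcnn j).lt_of_ne' (hzero j hj)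
    set r : α → ℝ := fun j => (c j) ^ ((k:ℝ)⁻¹) with hr
    have hrpos : ∀ j ∈ J, 0 < r j := fun j hj => Real.rpow_pos_of_pos (hcpos j hj) _
    set A : α → ℝ := fun j => a j * (r j)⁻¹ with hA
    set B : α → ℝ := fun j => b j * (r j)⁻¹ with hB
    have hkR : ((k:ℝ)) ≠ 0 := Nat.cast_ne_zero.2 hk.ne'
    have hrk : ∀ j ∈ J, (r j) ^ k = c j := fun j hj =>
      Real.rpow_inv_natCast_pow (hcpos j hj).le hk.ne'
    -- key normalized identity
    have hABk : ∀ j ∈ J, (1 - p) * (A j) ^ k + p * (B j) ^ k = 1 := by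
      intro j hj
      have : (A j) ^ k = a j ^ k * ((r j) ^ k)⁻¹ := by rw [hA]; rw [mul_pow, inv_pow]
      have hB' : (B j) ^ k = b j ^ k * ((r j) ^ k)⁻¹ := by rw [hB]; rw [mul_pow, inv_pow]
      rw [this, hB', hrk j hj]
      field_simp [(hcpos j hj).ne']
      rfl
    -- AM-GM bounds for ∏ A and ∏ B
    have hgm : ∀ (u : α → ℝ), (∀ j, 0 ≤ u j) →
        ∏ j ∈ J, u j ≤ 1 - J.card * (k:ℝ)⁻¹ + ∑ j ∈ J, (k:ℝ)⁻¹ * (u j ^ k) := by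
      intro u hu
      have hpad := gm_pad J (fun _ => (k:ℝ)⁻¹) (fun j => u j ^ k)
        (fun j _ => by positivity)
        (by
          rw [Finset.sum_const, nsmul_eq_mul, ← div_eq_mul_inv]
          rw [div_le_one (by exact_mod_cast hk : (0:ℝ) < (k:ℝ))]
          exact_mod_cast hJ)
        (fun j _ => pow_nonneg (hu j) k)
      calc ∏ j ∈ J, u j = ∏ j ∈ J, (u j ^ k) ^ ((k:ℝ)⁻¹) := by
            refine Finset.prod_congr rfl fun j _ => ?_
            rw [Real.pow_rpow_inv_natCast (hu j) hk.ne']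
        _ ≤ _ := by
            simpa [Finset.sum_const, nsmul_eq_mul] using hpad
    have hAnn : ∀ j, 0 ≤ A j := fun j =>
      mul_nonneg (ha j) (inv_nonneg.2 (Real.rpow_nonneg (hcnn j) _))
    have hBnn : ∀ j, 0 ≤ B j := fun j =>
      mul_nonneg (hb j) (inv_nonneg.2 (Real.rpow_nonneg (hcnn j) _))
    have hgmA := hgm A hAnn
    have hgmB := hgm B hBnn
    have hcomb : (1 - p) * ∏ j ∈ J, A j + p * ∏ j ∈ J, B j ≤ 1 := by
      have e1 : (1 - p) * (1 - J.card * (k:ℝ)⁻¹ + ∑ j ∈ J, (k:ℝ)⁻¹ * (A j ^ k))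
          + p * (1 - J.card * (k:ℝ)⁻¹ + ∑ j ∈ J, (k:ℝ)⁻¹ * (B j ^ k)) = 1 := by
        have : (1 - p) * (∑ j ∈ J, (k:ℝ)⁻¹ * (A j ^ k))
            + p * (∑ j ∈ J, (k:ℝ)⁻¹ * (B j ^ k))
            = ∑ j ∈ J, (k:ℝ)⁻¹ * ((1 - p) * (A j) ^ k + p * (B j) ^ k) := by
          rw [Finset.mul_sum, Finset.mul_sum, ← Finset.sum_add_distrib]
          exact Finset.sum_congr rfl fun j _ => by ring
        rw [show (1 - p) * (1 - J.card * (k:ℝ)⁻¹ + ∑ j ∈ J, (k:ℝ)⁻¹ * (A j ^ k))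
          + p * (1 - J.card * (k:ℝ)⁻¹ + ∑ j ∈ J, (k:ℝ)⁻¹ * (B j ^ k))
          = (1 - J.card * (k:ℝ)⁻¹)
            + ((1 - p) * (∑ j ∈ J, (k:ℝ)⁻¹ * (A j ^ k))
              + p * (∑ j ∈ J, (k:ℝ)⁻¹ * (B j ^ k))) by ring, this]
        rw [Finset.sum_congr rfl fun j hj => by rw [hABk j hj]]
        rw [Finset.sum_const, nsmul_eq_mul]
        ring
      calc (1 - p) * ∏ j ∈ J, A j + p * ∏ j ∈ J, B j
          ≤ (1 - p) * (1 - J.card * (k:ℝ)⁻¹ + ∑ j ∈ J, (k:ℝ)⁻¹ * (A j ^ k))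
            + p * (1 - J.card * (k:ℝ)⁻¹ + ∑ j ∈ J, (k:ℝ)⁻¹ * (B j ^ k)) :=
            add_le_add (mul_le_mul_of_nonneg_left hgmA (by linarith))
              (mul_le_mul_of_nonneg_left hgmB hp0)
        _ = 1 := e1
    -- denormalize
    have hprodA : ∏ j ∈ J, a j = (∏ j ∈ J, A j) * ∏ j ∈ J, r j := by
      rw [← Finset.prod_mul_distrib]
      refine Finset.prod_congr rfl fun j hj => ?_
      rw [hA]
      field_simp [(hrpos j hj).ne']
    have hprodB : ∏ j ∈ J, b j = (∏ j ∈ J, B j) * ∏ j ∈ J, r j := by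
      rw [← Finset.prod_mul_distrib]
      refine Finset.prod_congr rfl fun j hj => ?_
      rw [hB]
      field_simp [(hrpos j hj).ne']
    have hrprod : 0 ≤ ∏ j ∈ J, r j := Finset.prod_nonneg fun j hj => (hrpos j hj).le
    calc (1 - p) * ∏ j ∈ J, a j + p * ∏ j ∈ J, b j
        = ((1 - p) * ∏ j ∈ J, A j + p * ∏ j ∈ J, B j) * ∏ j ∈ J, r j := by
          rw [hprodA, hprodB]; ring
      _ ≤ 1 * ∏ j ∈ J, r j := mul_le_mul_of_nonneg_right hcomb hrprod
      _ = _ := by rw [one_mul]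

end ReadKAux

namespace ReadKAux

lemma monoCube_sum {m n : ℕ} {f : Fin n → (Fin m → ℝ) → ℝ} (h : ∀ j, MonoCube (f j)) :
    MonoCube (fun x => ∑ j, f j x) := fun x y hx hy hxy =>
  Finset.sum_le_sum fun j _ => h j x y hx hy hxy

lemma supermodCube_sum {m n : ℕ} {f : Fin n → (Fin m → ℝ) → ℝ} (h : ∀ j, SupermodCube (f j)) :
    SupermodCube (fun x => ∑ j, f j x) := by
  intro i x y hx hy hxy
  rw [← Finset.sum_sub_distrib, ← Finset.sum_sub_distrib]
  exact Finset.sum_le_sum fun j _ => h j i x y hx hy hxy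

lemma monoCube_exp_smul {m : ℕ} {g : (Fin m → ℝ) → ℝ} (hg : MonoCube g) {lam : ℝ}
    (hlam : 0 ≤ lam) : MonoCube fun x => Real.exp (lam * g x) := by
  intro x y hx hy hxy
  exact Real.exp_le_exp.2 (mul_le_mul_of_nonneg_left (hg x y hx hy hxy) hlam)

lemma supermodCube_exp_smul {m : ℕ} {g : (Fin m → ℝ) → ℝ} (hg : MonoCube g)
    (hsg : SupermodCube g) {lam : ℝ} (hlam : 0 ≤ lam) :
    SupermodCube fun x => Real.exp (lam * g x) := by
  intro i x y hx hy hxy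
  set a := lam * g (Function.update x i 0) with ha
  set b := lam * g (Function.update x i 1) with hb
  set c := lam * g (Function.update y i 0) with hc
  set d := lam * g (Function.update y i 1) with hd
  have hab : a ≤ b := mul_le_mul_of_nonneg_left
    (hg _ _ (binary_update hx (Or.inl rfl) i) (binary_update hx (Or.inr rfl) i)
      (update_zero_le_update_one x i)) hlam
  have hac : a ≤ c := mul_le_mul_of_nonneg_left
    (hg _ _ (binary_update hx (Or.inl rfl) i) (binary_update hy (Or.inl rfl) i)
      (update_le_update hxy i 0)) hlam
  have hsub : b - a ≤ d - c := by
    have h1 := mul_le_mul_of_nonneg_left (hsg i x y hx hy hxy) hlam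
    rw [ha, hb, hc, hd]; ring_nf; ring_nf at h1; linarith
  have e1 : Real.exp b - Real.exp a = Real.exp a * (Real.exp (b - a) - 1) := by
    rw [mul_sub, ← Real.exp_add, mul_one]
    have : a + (b - a) = b := by ring
    rw [this]
  have e2 : Real.exp d - Real.exp c = Real.exp c * (Real.exp (d - c) - 1) := by
    rw [mul_sub, ← Real.exp_add, mul_one]
    have : c + (d - c) = d := by ring
    rw [this]
  rw [e1, e2]
  exact mul_le_mul (Real.exp_le_exp.2 hac) (sub_le_sub_right (Real.exp_le_exp.2 hsub) 1)
    (by linarith [Real.one_le_exp (sub_nonneg.2 hab)]) (Real.exp_pos _).le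

section Prob

open MeasureTheory ProbabilityTheory

variable {Ω : Type*} [MeasurableSpace Ω] (μ : Measure Ω) [IsProbabilityMeasure μ] {m : ℕ}

lemma integrable_cube (R : Fin m → Ω → ℝ) (hR : ∀ i, Measurable (R i))
    (hRb : ∀ i ω, R i ω = 0 ∨ R i ω = 1) {h : (Fin m → ℝ) → ℝ} (hh : Measurable h) :
    Integrable (fun ω => h (fun i => R i ω)) μ := by
  obtain ⟨C, hC⟩ := bounded_cube h
  have hmeas : Measurable fun ω => h (fun i => R i ω) :=
    hh.comp (measurable_pi_lambda _ fun i => hR i)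
  refine (integrable_const C).mono' hmeas.aestronglyMeasurable (ae_of_all _ fun ω => ?_)
  rw [Real.norm_eq_abs]
  exact hC _ (fun i => hRb i ω)

lemma integrable_coord (R : Fin m → Ω → ℝ) (hR : ∀ i, Measurable (R i))
    (hRb : ∀ i ω, R i ω = 0 ∨ R i ω = 1) (i : Fin m) : Integrable (R i) μ :=
  integrable_cube μ R hR hRb (h := fun x => x i) (measurable_pi_apply i)

lemma coord_int_nonneg (R : Fin m → Ω → ℝ) (hRb : ∀ i ω, R i ω = 0 ∨ R i ω = 1) (i : Fin m) :
    0 ≤ ∫ ω, R i ω ∂μ :=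
  integral_nonneg fun ω => by rcases hRb i ω with h | h <;> simp [h]

lemma coord_int_le_one (R : Fin m → Ω → ℝ) (hR : ∀ i, Measurable (R i))
    (hRb : ∀ i ω, R i ω = 0 ∨ R i ω = 1) (i : Fin m) : ∫ ω, R i ω ∂μ ≤ 1 := by
  calc ∫ ω, R i ω ∂μ ≤ ∫ _, (1:ℝ) ∂μ := by
        refine integral_mono (integrable_coord μ R hR hRb i) (integrable_const 1) fun ω => ?_
        rcases hRb i ω with h | h <;> simp [h]
    _ = 1 := by simp

/-- Pointwise decomposition over the value of coordinate `i`. -/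
lemma binary_decomp {R : Fin m → Ω → ℝ} (hRb : ∀ i ω, R i ω = 0 ∨ R i ω = 1)
    (g : (Fin m → ℝ) → ℝ) (i : Fin m) (ω : Ω) :
    g (fun j => R j ω) = g (Function.update (fun j => R j ω) i 0)
      + (g (Function.update (fun j => R j ω) i 1)
          - g (Function.update (fun j => R j ω) i 0)) * R i ω := by
  rcases hRb i ω with h0 | h1
  · have e : Function.update (fun j => R j ω) i 0 = fun j => R j ω := by
      rw [show (0:ℝ) = (fun j => R j ω) i from h0.symm]
      exact Function.update_eq_self i _
    rw [e, h0]; ring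
  · have e : Function.update (fun j => R j ω) i 1 = fun j => R j ω := by
      rw [show (1:ℝ) = (fun j => R j ω) i from h1.symm]
      exact Function.update_eq_self i _
    rw [e, h1]; ring

/-- Averaging over coordinate `i` does not change the expectation for independent binaries. -/
lemma step_indep (Xs : Fin m → Ω → ℝ) (hXs : ∀ i, Measurable (Xs i))
    (hbs : ∀ i ω, Xs i ω = 0 ∨ Xs i ω = 1)
    (hind : iIndepFun Xs μ) (i : Fin m)
    {q : ℝ} (hq : q = ∫ ω, Xs i ω ∂μ)
    {g : (Fin m → ℝ) → ℝ} (hg : Measurable g) :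
    ∫ ω, Tav q i g (fun j => Xs j ω) ∂μ = ∫ ω, g (fun j => Xs j ω) ∂μ := by
  classical
  set Δ : (Fin m → ℝ) → ℝ :=
    fun x => g (Function.update x i 1) - g (Function.update x i 0) with hΔdef
  have hΔmeas : Measurable Δ :=
    (measurable_comp_update hg i 1).sub (measurable_comp_update hg i 0)
  have hΔ_ign : Ign i Δ := by
    intro x v
    simp only [hΔdef, Function.update_idem]
  -- independence of `Δ ∘ Xs` and `Xs i`
  set S : Finset (Fin m) := Finset.univ.erase i with hS
  have hST : Disjoint S ({i} : Finset (Fin m)) := by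
    simp [hS, Finset.disjoint_singleton_right]
  have base := hind.indepFun_finset S {i} hST hXs
  set φ : ({x // x ∈ S} → ℝ) → ℝ :=
    fun v => Δ (fun j => if hj : j ∈ S then v ⟨j, hj⟩ else 0) with hφ
  set ψ : ({x // x ∈ ({i} : Finset (Fin m))} → ℝ) → ℝ :=
    fun w => w ⟨i, Finset.mem_singleton_self i⟩ with hψ
  have hφm : Measurable φ := by
    apply hΔmeas.comp
    apply measurable_pi_lambda
    intro j
    by_cases hj : j ∈ S
    · simpa [hj] using measurable_pi_apply (⟨j, hj⟩ : {x // x ∈ S})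
    · simpa [hj] using measurable_const
  have hψm : Measurable ψ := measurable_pi_apply _
  have hcomp := (base.comp hφm hψm)
  have e1 : (φ ∘ fun a (j : {x // x ∈ S}) => Xs j a) = fun ω => Δ (fun j => Xs j ω) := by
    funext ω
    show Δ (fun j => if hj : j ∈ S then Xs j ω else 0) = Δ (fun j => Xs j ω)
    have harg : (fun j => if hj : j ∈ S then Xs j ω else 0)
        = Function.update (fun j => Xs j ω) i 0 := by
      funext j
      rcases eq_or_ne j i with rfl | hji
      · simp [hS]
      · simp [hS, Finset.mem_erase, hji, Function.update_of_ne hji]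
    rw [harg, hΔ_ign]
  have e2 : (ψ ∘ fun a (j : {x // x ∈ ({i} : Finset (Fin m))}) => Xs j a) = Xs i := rfl
  rw [e1, e2] at hcomp
  -- integrability
  have int_upd0 : Integrable (fun ω => g (Function.update (fun j => Xs j ω) i 0)) μ :=
    integrable_cube μ Xs hXs hbs (measurable_comp_update hg i 0)
  have intΔ : Integrable (fun ω => Δ (fun j => Xs j ω)) μ :=
    integrable_cube μ Xs hXs hbs hΔmeas
  have intΔX : Integrable (fun ω => Δ (fun j => Xs j ω) * Xs i ω) μ :=
    integrable_cube μ Xs hXs hbs (h := fun x => Δ x * x i) (hΔmeas.mul (measurable_pi_apply i))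
  have hmul := hcomp.integral_fun_mul_eq_mul_integral intΔ.aestronglyMeasurable
    (integrable_coord μ Xs hXs hbs i).aestronglyMeasurable
  have lhs_eq : ∫ ω, Tav q i g (fun j => Xs j ω) ∂μ
      = ∫ ω, g (Function.update (fun j => Xs j ω) i 0) ∂μ
        + q * ∫ ω, Δ (fun j => Xs j ω) ∂μ := by
    rw [show (fun ω => Tav q i g (fun j => Xs j ω))
        = fun ω => g (Function.update (fun j => Xs j ω) i 0)
          + q * Δ (fun j => Xs j ω) from funext fun ω => by
        rw [Tav_apply']]
    rw [integral_add int_upd0 (intΔ.const_mul q), integral_const_mul]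
  have rhs_eq : ∫ ω, g (fun j => Xs j ω) ∂μ
      = ∫ ω, g (Function.update (fun j => Xs j ω) i 0) ∂μ
        + q * ∫ ω, Δ (fun j => Xs j ω) ∂μ := by
    rw [show (fun ω => g (fun j => Xs j ω))
        = fun ω => g (Function.update (fun j => Xs j ω) i 0)
          + Δ (fun j => Xs j ω) * Xs i ω from funext fun ω => binary_decomp hbs g i ω]
    rw [integral_add int_upd0 intΔX, hmul, hq]
    ring
  rw [lhs_eq, rhs_eq]

end Prob

end ReadKAux

namespace ReadKAux

section Prob2

open MeasureTheory ProbabilityTheory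

variable {Ω : Type*} [MeasurableSpace Ω] (μ : Measure Ω) [IsProbabilityMeasure μ] {m : ℕ}

/-- The 1-NA step: averaging coordinate `i` increases the expectation of a monotone
supermodular function. -/
lemma step_na (X : Fin m → Ω → ℝ) (hX : ∀ i, Measurable (X i))
    (hbin : ∀ i ω, X i ω = 0 ∨ X i ω = 1) (hNA : OneNA μ X) (i : Fin m)
    {q : ℝ} (hq : q = ∫ ω, X i ω ∂μ)
    {h : (Fin m → ℝ) → ℝ} (hh : Measurable h) (hmono : MonoCube h) (hsup : SupermodCube h) :
    ∫ ω, h (fun j => X j ω) ∂μ ≤ ∫ ω, Tav q i h (fun j => X j ω) ∂μ := by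
  classical
  set Δ : (Fin m → ℝ) → ℝ :=
    fun x => h (Function.update x i 1) - h (Function.update x i 0) with hΔdef
  have hΔmeas : Measurable Δ :=
    (measurable_comp_update hh i 1).sub (measurable_comp_update hh i 0)
  have hΔmono : MonoCube Δ := fun x y hx hy hxy => hsup i x y hx hy hxy
  have hΔdep : ∀ x y : Fin m → ℝ, (∀ j, j ≠ i → x j = y j) → Δ x = Δ y := by
    intro x y hxy
    have e1 : Function.update x i (1:ℝ) = Function.update y i 1 := by
      funext j
      rcases eq_or_ne j i with rfl | hji
      · simp
      · simp [Function.update_of_ne hji, hxy j hji]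
    have e0 : Function.update x i (0:ℝ) = Function.update y i 0 := by
      funext j
      rcases eq_or_ne j i with rfl | hji
      · simp
      · simp [Function.update_of_ne hji, hxy j hji]
    simp only [hΔdef, e1, e0]
  have hNAi := hNA i Δ id hΔmeas hΔmono hΔdep measurable_id monotone_id
  simp only [id_eq] at hNAi
  have int_upd0 : Integrable (fun ω => h (Function.update (fun j => X j ω) i 0)) μ :=
    integrable_cube μ X hX hbin (measurable_comp_update hh i 0)
  have intΔ : Integrable (fun ω => Δ (fun j => X j ω)) μ :=
    integrable_cube μ X hX hbin hΔmeas
  have intΔX : Integrable (fun ω => Δ (fun j => X j ω) * X i ω) μ :=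
    integrable_cube μ X hX hbin (h := fun x => Δ x * x i) (hΔmeas.mul (measurable_pi_apply i))
  have lhs_eq : ∫ ω, h (fun j => X j ω) ∂μ
      = ∫ ω, h (Function.update (fun j => X j ω) i 0) ∂μ
        + ∫ ω, Δ (fun j => X j ω) * X i ω ∂μ := by
    rw [show (fun ω => h (fun j => X j ω))
        = fun ω => h (Function.update (fun j => X j ω) i 0)
          + Δ (fun j => X j ω) * X i ω from funext fun ω => binary_decomp hbin h i ω]
    rw [integral_add int_upd0 intΔX]
  have rhs_eq : ∫ ω, Tav q i h (fun j => X j ω) ∂μ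
      = ∫ ω, h (Function.update (fun j => X j ω) i 0) ∂μ
        + (∫ ω, Δ (fun j => X j ω) ∂μ) * q := by
    rw [show (fun ω => Tav q i h (fun j => X j ω))
        = fun ω => h (Function.update (fun j => X j ω) i 0)
          + q * Δ (fun j => X j ω) from funext fun ω => by rw [Tav_apply']]
    rw [integral_add int_upd0 (intΔ.const_mul q), integral_const_mul]
    ring
  rw [lhs_eq, rhs_eq, hq]
  exact add_le_add_right hNAi _

/-- Decoupling: for monotone supermodular `h`, the dependent expectation is at most
the independent one. -/
lemma decouple (X Xs : Fin m → Ω → ℝ)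
    (hX : ∀ i, Measurable (X i)) (hbin : ∀ i ω, X i ω = 0 ∨ X i ω = 1)
    (hNA : OneNA μ X)
    (hXs : ∀ i, Measurable (Xs i)) (hbs : ∀ i ω, Xs i ω = 0 ∨ Xs i ω = 1)
    (hind : iIndepFun Xs μ)
    (hmarg : ∀ i, Measure.map (Xs i) μ = Measure.map (X i) μ)
    {h : (Fin m → ℝ) → ℝ} (hh : Measurable h) (hmono : MonoCube h) (hsup : SupermodCube h) :
    ∫ ω, h (fun j => X j ω) ∂μ ≤ ∫ ω, h (fun j => Xs j ω) ∂μ := by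
  classical
  set q : Fin m → ℝ := fun i => ∫ ω, X i ω ∂μ with hqdef
  have hqs : ∀ i, q i = ∫ ω, Xs i ω ∂μ := by
    intro i
    have h1 : ∫ ω, X i ω ∂μ = ∫ x, x ∂(Measure.map (X i) μ) :=
      (integral_map (hX i).aemeasurable aestronglyMeasurable_id).symm
    have h2 : ∫ ω, Xs i ω ∂μ = ∫ x, x ∂(Measure.map (Xs i) μ) :=
      (integral_map (hXs i).aemeasurable aestronglyMeasurable_id).symm
    show ∫ ω, X i ω ∂μ = ∫ ω, Xs i ω ∂μ
    rw [h1, h2, hmarg i]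
  have hq0 : ∀ i, 0 ≤ q i := fun i => coord_int_nonneg μ X hbin i
  have hq1 : ∀ i, q i ≤ 1 := fun i => coord_int_le_one μ X hX hbin i
  set TL : List (Fin m) → ((Fin m → ℝ) → ℝ) → ((Fin m → ℝ) → ℝ) :=
    fun l g => l.foldr (fun i acc => Tav (q i) i acc) g with hTL
  have props : ∀ (l : List (Fin m)) (g : (Fin m → ℝ) → ℝ),
      Measurable g → MonoCube g → SupermodCube g →
      Measurable (TL l g) ∧ MonoCube (TL l g) ∧ SupermodCube (TL l g) := by
    intro l
    induction l with
    | nil => exact fun g h1 h2 h3 => ⟨h1, h2, h3⟩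
    | cons i l ih =>
      intro g h1 h2 h3
      obtain ⟨m1, m2, m3⟩ := ih g h1 h2 h3
      exact ⟨Tav_measurable m1, Tav_mono (hq0 i) (hq1 i) m2, Tav_supermod (hq0 i) (hq1 i) m3⟩
  have measTL : ∀ (l : List (Fin m)) (g : (Fin m → ℝ) → ℝ), Measurable g →
      Measurable (TL l g) := by
    intro l
    induction l with
    | nil => exact fun g h1 => h1
    | cons i l ih => exact fun g h1 => Tav_measurable (ih g h1)
  have mono_chain : ∀ l : List (Fin m),
      ∫ ω, h (fun j => X j ω) ∂μ ≤ ∫ ω, TL l h (fun j => X j ω) ∂μ := by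
    intro l
    induction l with
    | nil => exact le_refl _
    | cons i l ih =>
      refine le_trans ih ?_
      obtain ⟨m1, m2, m3⟩ := props l h hh hmono hsup
      exact step_na μ X hX hbin hNA i (by rw [hqdef]) m1 m2 m3
  have eq_chain : ∀ (l : List (Fin m)) (g : (Fin m → ℝ) → ℝ), Measurable g →
      ∫ ω, TL l g (fun j => Xs j ω) ∂μ = ∫ ω, g (fun j => Xs j ω) ∂μ := by
    intro l
    induction l with
    | nil => exact fun g _ => rfl
    | cons i l ih =>
      intro g hg
      calc ∫ ω, Tav (q i) i (TL l g) (fun j => Xs j ω) ∂μ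
          = ∫ ω, TL l g (fun j => Xs j ω) ∂μ :=
            step_indep μ Xs hXs hbs hind i (hqs i) (measTL l g hg)
        _ = ∫ ω, g (fun j => Xs j ω) ∂μ := ih g hg
  have ign_chain : ∀ (l : List (Fin m)) (g : (Fin m → ℝ) → ℝ) (j : Fin m), j ∈ l →
      Ign j (TL l g) := by
    intro l
    induction l with
    | nil => simp
    | cons i l ih =>
      intro g j hj
      rcases List.mem_cons.1 hj with rfl | hj'
      · exact Tav_ign_self (q j) j (TL l g)
      · exact Tav_ign (ih g j hj') (q i) i
  set L := List.finRange m with hL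
  have hconst : ∀ x y, TL L h x = TL L h y :=
    ign_all_const (fun i => ign_chain L h i (List.mem_finRange i))
  calc ∫ ω, h (fun j => X j ω) ∂μ ≤ ∫ ω, TL L h (fun j => X j ω) ∂μ := mono_chain L
    _ = ∫ ω, TL L h (fun j => Xs j ω) ∂μ :=
        integral_congr_ae (Filter.Eventually.of_forall fun ω => hconst _ _)
    _ = ∫ ω, h (fun j => Xs j ω) ∂μ := eq_chain L h hh

end Prob2

end ReadKAux

namespace ReadKAux

section Finner

open MeasureTheory ProbabilityTheory

variable {Ω : Type*} [MeasurableSpace Ω] (μ : Measure Ω) [IsProbabilityMeasure μ] {m n : ℕ}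

/-- Finner-type generalized Hölder inequality for independent binary variables
and a read-`k` family of nonnegative functions. -/
lemma finner (k : ℕ) (hk : 0 < k) (Xs : Fin m → Ω → ℝ) (hXs : ∀ i, Measurable (Xs i))
    (hbs : ∀ i ω, Xs i ω = 0 ∨ Xs i ω = 1)
    (hind : iIndepFun Xs μ)
    (u : Fin n → (Fin m → ℝ) → ℝ) (hu : ∀ j, Measurable (u j)) (hupos : ∀ j x, 0 ≤ u j x)
    (Q : Fin n → Finset (Fin m)) (hign : ∀ j i, i ∉ Q j → Ign i (u j))
    (hread : ∀ i : Fin m, ((Finset.univ : Finset (Fin n)).filter fun j => i ∈ Q j).card ≤ k) :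
    ∫ ω, ∏ j, u j (fun i' => Xs i' ω) ∂μ ≤
      ∏ j, (∫ ω, (u j (fun i' => Xs i' ω)) ^ k ∂μ) ^ ((k:ℝ)⁻¹) := by
  classical
  suffices main : ∀ (A : Finset (Fin m)) (u : Fin n → (Fin m → ℝ) → ℝ)
      (Q : Fin n → Finset (Fin m)),
      (∀ j, Measurable (u j)) → (∀ j x, 0 ≤ u j x) → (∀ j i, i ∉ Q j → Ign i (u j)) →
      (∀ i : Fin m, ((Finset.univ : Finset (Fin n)).filter fun j => i ∈ Q j).card ≤ k) →
      (∀ j, Q j ⊆ A) →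
      ∫ ω, ∏ j, u j (fun i' => Xs i' ω) ∂μ ≤
        ∏ j, (∫ ω, (u j (fun i' => Xs i' ω)) ^ k ∂μ) ^ ((k:ℝ)⁻¹) by
    exact main Finset.univ u Q hu hupos hign hread (fun j => Finset.subset_univ _)
  intro A
  induction A using Finset.induction_on with
  | empty =>
    intro u Q hu hupos hign hread hQA
    have hconst : ∀ j (x : Fin m → ℝ), u j x = u j (fun _ => 0) := by
      intro j x
      refine ign_all_const (fun i => hign j i ?_) x _
      rw [Finset.subset_empty.1 (hQA j)]
      exact Finset.notMem_empty i
    set c : Fin n → ℝ := fun j => u j (fun _ => 0) with hcdef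
    have hcnn : ∀ j, 0 ≤ c j := fun j => hupos j _
    have e1 : (fun ω => ∏ j, u j (fun i' => Xs i' ω)) = fun _ => ∏ j, c j :=
      funext fun ω => Finset.prod_congr rfl fun j _ => hconst j _
    have e2 : ∀ j, (fun ω => (u j (fun i' => Xs i' ω)) ^ k) = fun _ => (c j) ^ k :=
      fun j => funext fun ω => by rw [hconst j]
    rw [e1, integral_const]
    simp only [probReal_univ, smul_eq_mul, one_mul]
    refine le_of_eq (Finset.prod_congr rfl fun j _ => ?_).symm
    rw [e2 j, integral_const]
    simp only [probReal_univ, smul_eq_mul, one_mul]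
    exact Real.pow_rpow_inv_natCast (hcnn j) hk.ne'
  | @insert i A' hiA' IH =>
    intro u Q hu hupos hign hread hQA
    set qq : ℝ := ∫ ω, Xs i ω ∂μ with hqq
    have hqq0 : 0 ≤ qq := coord_int_nonneg μ Xs hbs i
    have hqq1 : qq ≤ 1 := coord_int_le_one μ Xs hXs hbs i
    set v : Fin n → (Fin m → ℝ) → ℝ := fun j =>
      if i ∈ Q j then (fun x => (Tav qq i (fun y => (u j y) ^ k) x) ^ ((k:ℝ)⁻¹))
      else u j with hvdef
    have hTavnn : ∀ j x, 0 ≤ Tav qq i (fun y => (u j y) ^ k) x :=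
      fun j x => Tav_nonneg hqq0 hqq1 (fun y => pow_nonneg (hupos j y) k) i x
    have hvmeas : ∀ j, Measurable (v j) := by
      intro j
      by_cases hij : i ∈ Q j
      · simp only [hvdef, if_pos hij]
        exact (Real.continuous_rpow_const (by positivity)).measurable.comp
          (Tav_measurable ((hu j).pow_const k))
      · simp only [hvdef, if_neg hij]
        exact hu j
    have hvpos : ∀ j x, 0 ≤ v j x := by
      intro j x
      by_cases hij : i ∈ Q j
      · simp only [hvdef, if_pos hij]
        exact Real.rpow_nonneg (hTavnn j x) _
      · simp only [hvdef, if_neg hij]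
        exact hupos j x
    set Q' : Fin n → Finset (Fin m) := fun j => (Q j).erase i with hQ'def
    have hign' : ∀ j i', i' ∉ Q' j → Ign i' (v j) := by
      intro j i' hi'
      by_cases hij : i ∈ Q j
      · have : v j = fun x => (Tav qq i (fun y => (u j y) ^ k) x) ^ ((k:ℝ)⁻¹) := by
          simp only [hvdef, if_pos hij]
        rw [this]
        rcases eq_or_ne i' i with rfl | hii
        · exact (Tav_ign_self qq i' _).comp (fun t => t ^ ((k:ℝ)⁻¹))
        · have hi'Q : i' ∉ Q j := fun hmem =>
            hi' (Finset.mem_erase.2 ⟨hii, hmem⟩)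
          exact ((Tav_ign ((hign j i' hi'Q).comp (fun t => t ^ k)) qq i).comp
            (fun t => t ^ ((k:ℝ)⁻¹)))
      · have : v j = u j := by simp only [hvdef, if_neg hij]
        rw [this]
        rcases eq_or_ne i' i with rfl | hii
        · exact hign j i' hij
        · exact hign j i' (fun hmem => hi' (Finset.mem_erase.2 ⟨hii, hmem⟩))
    have hread' : ∀ i' : Fin m,
        ((Finset.univ : Finset (Fin n)).filter fun j => i' ∈ Q' j).card ≤ k := by
      intro i'
      refine le_trans (Finset.card_le_card ?_) (hread i')
      intro j hj
      simp only [Finset.mem_filter] at hj ⊢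
      exact ⟨hj.1, Finset.mem_of_mem_erase hj.2⟩
    have hQ'A' : ∀ j, Q' j ⊆ A' := by
      intro j i' hi'
      have h1 := hQA j (Finset.mem_of_mem_erase hi')
      rcases Finset.mem_insert.1 h1 with rfl | h2
      · exact absurd rfl (Finset.ne_of_mem_erase hi')
      · exact h2
    -- pointwise Hölder step
    have hpoint : ∀ x : Fin m → ℝ,
        Tav qq i (fun y => ∏ j, u j y) x ≤ ∏ j, v j x := by
      intro x
      set J : Finset (Fin n) := Finset.univ.filter (fun j => i ∈ Q j) with hJdef
      have hsplitv := Finset.prod_filter_mul_prod_filter_not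
        (Finset.univ : Finset (Fin n)) (fun j => i ∈ Q j) (fun j => v j x)
      have hnn' : 0 ≤ ∏ j ∈ Finset.univ.filter (fun j => ¬ i ∈ Q j), u j x :=
        Finset.prod_nonneg fun j _ => hupos j x
      have hfix : ∀ (cc : ℝ), ∀ j ∈ Finset.univ.filter (fun j => ¬ i ∈ Q j),
          u j (Function.update x i cc) = u j x := by
        intro cc j hj
        exact hign j i (by simpa using (Finset.mem_filter.1 hj).2) x cc
      have e : Tav qq i (fun y => ∏ j, u j y) x
          = (∏ j ∈ Finset.univ.filter (fun j => ¬ i ∈ Q j), u j x)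
            * ((1 - qq) * ∏ j ∈ J, u j (Function.update x i 0)
                + qq * ∏ j ∈ J, u j (Function.update x i 1)) := by
        simp only [Tav]
        rw [← Finset.prod_filter_mul_prod_filter_not
            (Finset.univ : Finset (Fin n)) (fun j => i ∈ Q j)
            (fun j => u j (Function.update x i 0)),
          ← Finset.prod_filter_mul_prod_filter_not
            (Finset.univ : Finset (Fin n)) (fun j => i ∈ Q j)
            (fun j => u j (Function.update x i 1)),
          Finset.prod_congr rfl (hfix 0), Finset.prod_congr rfl (hfix 1)]
        ring
      have hH := holder_two k hk J (by simpa [hJdef] using hread i) qq hqq0 hqq1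
        (fun j => u j (Function.update x i 0)) (fun j => u j (Function.update x i 1))
        (fun j => hupos j _) (fun j => hupos j _)
      have hvJ : ∀ j ∈ J, ((1 - qq) * (u j (Function.update x i 0)) ^ k
          + qq * (u j (Function.update x i 1)) ^ k) ^ ((k:ℝ)⁻¹) = v j x := by
        intro j hj
        have hij : i ∈ Q j := (Finset.mem_filter.1 hj).2
        simp only [hvdef, if_pos hij, Tav]
      have hvJ' : ∀ j ∈ Finset.univ.filter (fun j => ¬ i ∈ Q j), u j x = v j x := by
        intro j hj
        have hij : ¬ i ∈ Q j := by simpa using (Finset.mem_filter.1 hj).2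
        simp only [hvdef, if_neg hij]
      calc Tav qq i (fun y => ∏ j, u j y) x
          = (∏ j ∈ Finset.univ.filter (fun j => ¬ i ∈ Q j), u j x)
            * ((1 - qq) * ∏ j ∈ J, u j (Function.update x i 0)
                + qq * ∏ j ∈ J, u j (Function.update x i 1)) := e
        _ ≤ (∏ j ∈ Finset.univ.filter (fun j => ¬ i ∈ Q j), u j x)
            * ∏ j ∈ J, ((1 - qq) * (u j (Function.update x i 0)) ^ k
                + qq * (u j (Function.update x i 1)) ^ k) ^ ((k:ℝ)⁻¹) :=
            mul_le_mul_of_nonneg_left hH hnn'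
        _ = ∏ j, v j x := by
            rw [Finset.prod_congr rfl hvJ, Finset.prod_congr rfl hvJ', ← hsplitv]
            ring
    -- integral chain
    have meas_prod_u : Measurable fun x => ∏ j, u j x :=
      Finset.measurable_prod Finset.univ (fun j _ => hu j)
    have meas_prod_v : Measurable fun x => ∏ j, v j x :=
      Finset.measurable_prod Finset.univ (fun j _ => hvmeas j)
    have E0 : ∫ ω, ∏ j, u j (fun i' => Xs i' ω) ∂μ
        = ∫ ω, Tav qq i (fun y => ∏ j, u j y) (fun i' => Xs i' ω) ∂μ :=
      (step_indep μ Xs hXs hbs hind i hqq meas_prod_u).symm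
    have E1 : ∫ ω, Tav qq i (fun y => ∏ j, u j y) (fun i' => Xs i' ω) ∂μ
        ≤ ∫ ω, ∏ j, v j (fun i' => Xs i' ω) ∂μ :=
      integral_mono (integrable_cube μ Xs hXs hbs (Tav_measurable meas_prod_u))
        (integrable_cube μ Xs hXs hbs meas_prod_v) (fun ω => hpoint _)
    have E2 := IH v Q' hvmeas hvpos hign' hread' hQ'A'
    have E3 : ∀ j, ∫ ω, (v j (fun i' => Xs i' ω)) ^ k ∂μ
        = ∫ ω, (u j (fun i' => Xs i' ω)) ^ k ∂μ := by
      intro j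
      by_cases hij : i ∈ Q j
      · have ep : ∀ x : Fin m → ℝ, (v j x) ^ k = Tav qq i (fun y => (u j y) ^ k) x := by
          intro x
          simp only [hvdef, if_pos hij]
          exact Real.rpow_inv_natCast_pow (hTavnn j x) hk.ne'
        calc ∫ ω, (v j (fun i' => Xs i' ω)) ^ k ∂μ
            = ∫ ω, Tav qq i (fun y => (u j y) ^ k) (fun i' => Xs i' ω) ∂μ :=
              integral_congr_ae (Filter.Eventually.of_forall fun ω => ep _)
          _ = ∫ ω, (u j (fun i' => Xs i' ω)) ^ k ∂μ :=
              step_indep μ Xs hXs hbs hind i hqq ((hu j).pow_const k)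
      · simp only [hvdef, if_neg hij]
    calc ∫ ω, ∏ j, u j (fun i' => Xs i' ω) ∂μ
        = ∫ ω, Tav qq i (fun y => ∏ j, u j y) (fun i' => Xs i' ω) ∂μ := E0
      _ ≤ ∫ ω, ∏ j, v j (fun i' => Xs i' ω) ∂μ := E1
      _ ≤ ∏ j, (∫ ω, (v j (fun i' => Xs i' ω)) ^ k ∂μ) ^ ((k:ℝ)⁻¹) := E2
      _ = ∏ j, (∫ ω, (u j (fun i' => Xs i' ω)) ^ k ∂μ) ^ ((k:ℝ)⁻¹) :=
          Finset.prod_congr rfl fun j _ => by rw [E3 j]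

end Finner

end ReadKAux


open ReadKAux in
/-- Upper-tail read-k bound for monotone supermodular functions of binary
1-negatively associated random variables. -/
theorem read_k_upper_tail_supermodular {Ω : Type*} [MeasurableSpace Ω] (μ : Measure Ω)
    [IsProbabilityMeasure μ] {m n k : ℕ} (hn : 0 < n) (hk : 0 < k)
    (X Xstar : Fin m → Ω → ℝ)
    (hX : ∀ i, Measurable (X i)) (hbin : ∀ i ω, X i ω = 0 ∨ X i ω = 1)
    (hNA : OneNA μ X)
    (hXstar : ∀ i, Measurable (Xstar i)) (hbinstar : ∀ i ω, Xstar i ω = 0 ∨ Xstar i ω = 1)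
    (hindep : iIndepFun Xstar μ)
    (hmarg : ∀ i, Measure.map (Xstar i) μ = Measure.map (X i) μ)
    (P : Fin n → Finset (Fin m))
    (hread : ∀ i : Fin m, (Finset.univ.filter fun j => i ∈ P j).card ≤ k)
    (f : Fin n → (Fin m → ℝ) → ℝ) (hfmeas : ∀ j, Measurable (f j))
    (hdep : ∀ j (x y : Fin m → ℝ), (∀ i ∈ P j, x i = y i) → f j x = f j y)
    (hrange : ∀ j (x : Fin m → ℝ), BinaryVec x → f j x ∈ Set.Icc (0 : ℝ) 1)
    (hmono : ∀ j, MonoCube (f j)) (hsup : ∀ j, SupermodCube (f j))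
    (p0 : ℝ) (hp0 : p0 = (1 / n : ℝ) * ∑ j, ∫ ω, f j (fun i => Xstar i ω) ∂μ)
    (ε : ℝ) (hε : 0 < ε) (hεle : p0 + ε ≤ 1) :
    (μ {ω | (p0 + ε) * n ≤ ∑ j, f j (fun i => X i ω)}).toReal ≤
      Real.exp (-(klBin (p0 + ε) p0) * n / k) := by
  classical
  open MeasureTheory ProbabilityTheory in
  set N : ℝ := (n : ℝ) with hNdef
  have hNpos : (0:ℝ) < N := by rw [hNdef]; exact_mod_cast hn
  set K : ℝ := (k : ℝ) with hKdef
  have hKpos : (0:ℝ) < K := by rw [hKdef]; exact_mod_cast hk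
  set t : ℝ := p0 + ε with htdef
  set q : Fin n → ℝ := fun j => ∫ ω, f j (fun i => Xstar i ω) ∂μ with hqdef
  have hbinXs : ∀ ω, BinaryVec (fun i => Xstar i ω) := fun ω i => hbinstar i ω
  have hq0 : ∀ j, 0 ≤ q j := fun j =>
    MeasureTheory.integral_nonneg fun ω => (hrange j _ (hbinXs ω)).1
  have hq1 : ∀ j, q j ≤ 1 := by
    intro j
    have := MeasureTheory.integral_mono
      (integrable_cube μ Xstar hXstar hbinstar (hfmeas j))
      (MeasureTheory.integrable_const (1:ℝ)) (fun ω => (hrange j _ (hbinXs ω)).2)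
    simpa using this
  have hp0q : p0 = N⁻¹ * ∑ j, q j := by
    rw [hp0, hqdef, hNdef, one_div]
  have hsumq : ∑ j, q j = N * p0 := by
    rw [hp0q]
    field_simp
  have hp0nn : 0 ≤ p0 := by
    rw [hp0q]
    exact mul_nonneg (by positivity) (Finset.sum_nonneg fun j _ => hq0 j)
  have hp0lt1 : p0 < 1 := by linarith
  -- The Chernoff-type core bound, valid for every positive `lam`.
  have core : ∀ lam : ℝ, 0 < lam →
      (μ {ω | t * N ≤ ∑ j, f j (fun i => X i ω)}).toReal ≤
        Real.exp (-(lam * (t * N))) * (1 - p0 + p0 * Real.exp (K * lam)) ^ ((N / K) : ℝ) := by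
    intro lam hlam
    set h : (Fin m → ℝ) → ℝ := fun x => Real.exp (lam * ∑ j, f j x) with hhdef
    have hSmeas : Measurable (fun x : Fin m → ℝ => ∑ j, f j x) :=
      Finset.measurable_sum Finset.univ (fun j _ => hfmeas j)
    have hhmeas : Measurable h := Real.measurable_exp.comp (hSmeas.const_mul lam)
    have hhmono : MonoCube h := monoCube_exp_smul (monoCube_sum hmono) hlam.le
    have hhsup : SupermodCube h :=
      supermodCube_exp_smul (monoCube_sum hmono) (supermodCube_sum hsup) hlam.le
    have hint : Integrable (fun ω => h (fun i => X i ω)) μ :=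
      integrable_cube μ X hX hbin hhmeas
    -- Markov's inequality
    have hmarkov := MeasureTheory.mul_meas_ge_le_integral_of_nonneg
      (MeasureTheory.ae_of_all μ fun ω => (Real.exp_pos (lam * ∑ j, f j (fun i => X i ω))).le)
      hint (Real.exp (lam * (t * N)))
    have hsetqe : {ω | Real.exp (lam * (t * N)) ≤ h (fun i => X i ω)}
        = {ω | t * N ≤ ∑ j, f j (fun i => X i ω)} := by
      ext ω
      simp only [Set.mem_setOf_eq, hhdef, Real.exp_le_exp]
      exact mul_le_mul_iff_right₀ hlam
    rw [hsetqe] at hmarkov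
    -- decoupling
    have hdec := decouple μ X Xstar hX hbin hNA hXstar hbinstar hindep hmarg
      hhmeas hhmono hhsup
    -- product representation
    set u : Fin n → (Fin m → ℝ) → ℝ := fun j x => Real.exp (lam * f j x) with hudef
    have humeas : ∀ j, Measurable (u j) := fun j =>
      Real.measurable_exp.comp ((hfmeas j).const_mul lam)
    have hupos' : ∀ j x, 0 ≤ u j x := fun j x => (Real.exp_pos _).le
    have huign : ∀ j i, i ∉ P j → Ign i (u j) := by
      intro j i hiP x v
      simp only [hudef]
      congr 2
      refine hdep j _ _ (fun i' hi' => ?_)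
      have hne : i' ≠ i := fun he => hiP (by rw [← he]; exact hi')
      exact Function.update_of_ne hne _ _
    have hprod : ∀ x, h x = ∏ j, u j x := by
      intro x
      simp only [hhdef, hudef, Finset.mul_sum, Real.exp_sum]
    have hfinner := finner μ k hk Xstar hXstar hbinstar hindep u humeas hupos' P huign hread
    -- per-term moment bound
    set cE : ℝ := Real.exp (K * lam) with hcEdef
    have hcE1 : 1 ≤ cE := Real.one_le_exp (by positivity)
    set a : Fin n → ℝ := fun j => 1 - q j + q j * cE with hadef
    have ha_nn : ∀ j, 0 ≤ a j := fun j =>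
      add_nonneg (by linarith [hq1 j]) (mul_nonneg (hq0 j) (by linarith))
    have hmom : ∀ j, ∫ ω, (u j (fun i => Xstar i ω)) ^ k ∂μ ≤ a j := by
      intro j
      have intf : Integrable (fun ω => f j (fun i => Xstar i ω)) μ :=
        integrable_cube μ Xstar hXstar hbinstar (hfmeas j)
      have intLHS : Integrable (fun ω => (u j (fun i => Xstar i ω)) ^ k) μ :=
        integrable_cube μ Xstar hXstar hbinstar ((humeas j).pow_const k)
      have intRHS : Integrable
          (fun ω => 1 - f j (fun i => Xstar i ω) + f j (fun i => Xstar i ω) * cE) μ :=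
        ((MeasureTheory.integrable_const (1:ℝ)).sub intf).add (intf.mul_const cE)
      have hpt : ∀ ω, (u j (fun i => Xstar i ω)) ^ k
          ≤ 1 - f j (fun i => Xstar i ω) + f j (fun i => Xstar i ω) * cE := by
        intro ω
        set y := f j (fun i => Xstar i ω) with hy
        have hy0 : 0 ≤ y := (hrange j _ (hbinXs ω)).1
        have hy1 : y ≤ 1 := (hrange j _ (hbinXs ω)).2
        have e1 : (u j (fun i => Xstar i ω)) ^ k = Real.exp (y * (K * lam)) := by
          simp only [hudef]
          rw [← Real.exp_nat_mul]
          congr 1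
          rw [hKdef]
          ring
        rw [e1]
        have hcvx := convexOn_exp.2 (Set.mem_univ (0:ℝ)) (Set.mem_univ (K * lam))
          (by linarith : (0:ℝ) ≤ 1 - y) hy0 (by ring)
        simp only [smul_eq_mul, mul_zero, zero_add, Real.exp_zero, mul_one] at hcvx
        rw [hcEdef]
        linarith
      calc ∫ ω, (u j (fun i => Xstar i ω)) ^ k ∂μ
          ≤ ∫ ω, (1 - f j (fun i => Xstar i ω) + f j (fun i => Xstar i ω) * cE) ∂μ :=
            MeasureTheory.integral_mono intLHS intRHS hpt
        _ = a j := by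
            have e : (fun ω => 1 - f j (fun i => Xstar i ω) + f j (fun i => Xstar i ω) * cE)
                = fun ω => 1 + (f j (fun i => Xstar i ω)) * (cE - 1) := funext fun ω => by ring
            rw [e, MeasureTheory.integral_add (MeasureTheory.integrable_const (1:ℝ))
              (intf.mul_const (cE - 1)), MeasureTheory.integral_mul_const]
            simp only [MeasureTheory.integral_const, probReal_univ,
              smul_eq_mul, one_mul, hadef, hqdef]
            ring
    -- AM-GM step
    set M : ℝ := 1 - p0 + p0 * cE with hMdef
    have hM_nn : 0 ≤ M :=
      add_nonneg (by linarith) (mul_nonneg hp0nn (by linarith))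
    have hmean : ∑ j, N⁻¹ * a j = M := by
      have h1 : ∑ j, a j = N - N * p0 + (N * p0) * cE := by
        simp only [hadef]
        rw [Finset.sum_add_distrib, Finset.sum_sub_distrib, Finset.sum_const,
          Finset.card_univ, Fintype.card_fin, nsmul_eq_mul, mul_one, ← Finset.sum_mul, hsumq,
          hNdef]
      rw [← Finset.mul_sum, h1, hMdef]
      field_simp
    have hgm : ∏ j, a j ≤ M ^ n := by
      have hgm1 := Real.geom_mean_le_arith_mean_weighted Finset.univ (fun _ => N⁻¹) a
        (fun j _ => by positivity)
        (by
          rw [Finset.sum_const, Finset.card_univ, Fintype.card_fin, nsmul_eq_mul]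
          field_simp
          rfl)
        (fun j _ => ha_nn j)
      rw [hmean] at hgm1
      rw [Real.finset_prod_rpow Finset.univ a (fun j _ => ha_nn j) _] at hgm1
      have hP_nn : 0 ≤ ∏ j, a j := Finset.prod_nonneg fun j _ => ha_nn j
      calc ∏ j, a j = ((∏ j, a j) ^ ((N⁻¹ : ℝ))) ^ (n:ℕ) := by
            rw [← Real.rpow_natCast ((∏ j, a j) ^ ((N⁻¹ : ℝ))) n, ← Real.rpow_mul hP_nn]
            rw [show (N⁻¹ * (n:ℝ) : ℝ) = 1 by rw [hNdef]; field_simp]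
            exact (Real.rpow_one _).symm
        _ ≤ M ^ n := pow_le_pow_left₀ (Real.rpow_nonneg hP_nn _) hgm1 n
    have hfinal : ∏ j, (∫ ω, (u j (fun i => Xstar i ω)) ^ k ∂μ) ^ ((k:ℝ)⁻¹)
        ≤ M ^ ((N / K) : ℝ) := by
      have hintnn : ∀ j, 0 ≤ ∫ ω, (u j (fun i => Xstar i ω)) ^ k ∂μ := fun j =>
        MeasureTheory.integral_nonneg fun ω => pow_nonneg (hupos' j _) k
      calc ∏ j, (∫ ω, (u j (fun i => Xstar i ω)) ^ k ∂μ) ^ ((k:ℝ)⁻¹)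
          ≤ ∏ j, (a j) ^ ((k:ℝ)⁻¹) :=
            Finset.prod_le_prod (fun j _ => Real.rpow_nonneg (hintnn j) _)
              (fun j _ => Real.rpow_le_rpow (hintnn j) (hmom j) (by positivity))
        _ = (∏ j, a j) ^ ((k:ℝ)⁻¹) :=
            Real.finset_prod_rpow Finset.univ a (fun j _ => ha_nn j) _
        _ ≤ (M ^ n) ^ ((k:ℝ)⁻¹) :=
            Real.rpow_le_rpow (Finset.prod_nonneg fun j _ => ha_nn j) hgm (by positivity)
        _ = M ^ ((N / K) : ℝ) := by
            rw [← Real.rpow_natCast M n, ← Real.rpow_mul hM_nn]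
            congr 1
    -- assemble
    have hEbound : (μ {ω | t * N ≤ ∑ j, f j (fun i => X i ω)}).toReal
        ≤ Real.exp (-(lam * (t * N))) * ∫ ω, h (fun i => X i ω) ∂μ := by
      have hep := Real.exp_pos (lam * (t * N))
      rw [Real.exp_neg]
      calc (μ {ω | t * N ≤ ∑ j, f j (fun i => X i ω)}).toReal
          = (Real.exp (lam * (t * N)))⁻¹
            * (Real.exp (lam * (t * N))
              * (μ {ω | t * N ≤ ∑ j, f j (fun i => X i ω)}).toReal) := by
            field_simp
        _ ≤ _ := mul_le_mul_of_nonneg_left hmarkov (by positivity)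
    have hIchain : ∫ ω, h (fun i => X i ω) ∂μ ≤ M ^ ((N / K) : ℝ) := by
      calc ∫ ω, h (fun i => X i ω) ∂μ ≤ ∫ ω, h (fun i => Xstar i ω) ∂μ := hdec
        _ = ∫ ω, ∏ j, u j (fun i => Xstar i ω) ∂μ :=
            MeasureTheory.integral_congr_ae
              (Filter.Eventually.of_forall fun ω => hprod _)
        _ ≤ ∏ j, (∫ ω, (u j (fun i => Xstar i ω)) ^ k ∂μ) ^ ((k:ℝ)⁻¹) := hfinner
        _ ≤ M ^ ((N / K) : ℝ) := hfinal
    calc (μ {ω | t * N ≤ ∑ j, f j (fun i => X i ω)}).toReal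
        ≤ Real.exp (-(lam * (t * N))) * ∫ ω, h (fun i => X i ω) ∂μ := hEbound
      _ ≤ Real.exp (-(lam * (t * N))) * M ^ ((N / K) : ℝ) :=
          mul_le_mul_of_nonneg_left hIchain (Real.exp_pos _).le
  -- Now conclude, splitting into cases.
  by_cases hp0pos : 0 < p0
  · by_cases ht1 : t < 1
    · -- main case: pick the optimal `lam`
      have htpos : 0 < t := by rw [htdef]; linarith
      have h1t : (0:ℝ) < 1 - t := by linarith
      have hpt : p0 < t := by rw [htdef]; linarith
      have h1p : (0:ℝ) < 1 - p0 := by linarith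
      set L1 : ℝ := Real.log (t / p0) with hL1def
      set L2 : ℝ := Real.log ((1 - p0) / (1 - t)) with hL2def
      have hL1 : 0 < L1 := Real.log_pos ((one_lt_div hp0pos).2 hpt)
      have hL2 : 0 < L2 := Real.log_pos ((one_lt_div h1t).2 (by linarith))
      set lam : ℝ := (L1 + L2) / K with hlamdef
      have hlampos : 0 < lam := div_pos (by linarith) hKpos
      have hKlam : K * lam = L1 + L2 := by
        rw [hlamdef]
        field_simp
      have hexpK : Real.exp (K * lam) = (t / p0) * ((1 - p0) / (1 - t)) := by
        rw [hKlam, Real.exp_add, hL1def, hL2def, Real.exp_log (div_pos htpos hp0pos),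
          Real.exp_log (div_pos h1p h1t)]
      have hMval : 1 - p0 + p0 * Real.exp (K * lam) = (1 - p0) / (1 - t) := by
        rw [hexpK]
        field_simp
        ring
      have hbound := core lam hlampos
      rw [hMval] at hbound
      refine le_trans hbound (le_of_eq ?_)
      rw [Real.rpow_def_of_pos (div_pos h1p h1t), ← Real.exp_add]
      congr 1
      have hlogneg : Real.log ((1 - t) / (1 - p0)) = -L2 := by
        rw [show (1 - t) / (1 - p0) = ((1 - p0) / (1 - t))⁻¹ by rw [inv_div], Real.log_inv,
          hL2def]
      rw [← hL2def]
      have hkl : klBin t p0 = t * L1 - (1 - t) * L2 := by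
        simp only [klBin]
        rw [hlogneg, ← hL1def]
        ring
      rw [hkl, hlamdef]
      field_simp
      ring
    · -- boundary case `t = 1`
      have ht1' : t = 1 := le_antisymm hεle (not_lt.1 ht1)
      have hRHSeq : Real.exp (-(klBin t p0) * N / K) = p0 ^ ((N / K) : ℝ) := by
        rw [Real.rpow_def_of_pos hp0pos]
        congr 1
        rw [ht1']
        simp only [klBin, sub_self, zero_mul, add_zero, one_mul]
        rw [Real.log_div one_ne_zero hp0pos.ne', Real.log_one]
        ring
      rw [hRHSeq]
      have htend : Filter.Tendsto
          (fun lam : ℝ => ((1 - p0) * Real.exp (-(K * lam)) + p0) ^ ((N / K) : ℝ))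
          Filter.atTop (nhds (p0 ^ ((N / K) : ℝ))) := by
        have h1 : Filter.Tendsto (fun lam : ℝ => -(K * lam)) Filter.atTop Filter.atBot :=
          Filter.tendsto_neg_atTop_atBot.comp
            (Filter.Tendsto.const_mul_atTop hKpos Filter.tendsto_id)
        have h2 : Filter.Tendsto (fun lam : ℝ => Real.exp (-(K * lam)))
            Filter.atTop (nhds 0) := Real.tendsto_exp_atBot.comp h1
        have h3 := (h2.const_mul (1 - p0)).add_const p0
        rw [mul_zero, zero_add] at h3
        exact ((Real.continuousAt_rpow_const p0 _ (Or.inl hp0pos.ne')).tendsto).comp h3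
      refine ge_of_tendsto htend ?_
      filter_upwards [Filter.eventually_ge_atTop (1:ℝ)] with lam hlam1
      have hlampos : (0:ℝ) < lam := by linarith
      have hbound := core lam hlampos
      refine le_trans hbound (le_of_eq ?_)
      have hM_nn : (0:ℝ) ≤ 1 - p0 + p0 * Real.exp (K * lam) :=
        add_nonneg (by linarith) (mul_nonneg hp0nn (Real.exp_pos _).le)
      have hME : Real.exp (-(lam * (t * N))) = (Real.exp (-(K * lam))) ^ ((N / K) : ℝ) := by
        rw [← Real.exp_mul]
        congr 1
        rw [ht1']
        field_simp
      rw [hME, ← Real.mul_rpow (Real.exp_pos _).le hM_nn]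
      congr 1
      have hid : Real.exp (-(K * lam)) * Real.exp (K * lam) = 1 := by
        rw [← Real.exp_add]
        simp
      linear_combination p0 * hid
  · -- degenerate case `p0 = 0`
    have hp00 : p0 = 0 := le_antisymm (not_lt.1 hp0pos) hp0nn
    have h1tnn : (0:ℝ) ≤ 1 - t := by linarith
    have hklle : klBin t p0 ≤ 0 := by
      rw [hp00]
      simp only [klBin, div_zero, Real.log_zero, mul_zero, sub_zero, div_one, zero_add]
      exact mul_nonpos_iff.2 (Or.inl ⟨h1tnn, Real.log_nonpos (by linarith) (by linarith)⟩)
    have hRHS1 : (1:ℝ) ≤ Real.exp (-(klBin t p0) * N / K) := by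
      have h0 : 0 ≤ -(klBin t p0) * N / K :=
        div_nonneg (mul_nonneg (neg_nonneg.2 hklle) hNpos.le) hKpos.le
      calc (1:ℝ) = Real.exp 0 := Real.exp_zero.symm
        _ ≤ _ := Real.exp_le_exp.2 h0
    have h1 : μ {ω | t * N ≤ ∑ j, f j (fun i => X i ω)} ≤ 1 := MeasureTheory.prob_le_one
    calc (μ {ω | t * N ≤ ∑ j, f j (fun i => X i ω)}).toReal
        ≤ ((1:ENNReal)).toReal := ENNReal.toReal_mono ENNReal.one_ne_top h1
      _ = 1 := by simp
      _ ≤ Real.exp (-(klBin t p0) * N / K) := hRHS1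
end

section
/- Lower-tail read-k bound for submodular functions under 1-negative association: With the setup above but f_j : {0,1}^{P_j} → [0,1] monotone submodular, and p_0 = (1/n)·Σ_j E[f_j(X*_{P_j})], for every ε > 0 with p_0 − ε ≥ 0: Pr[Σ_{j=1}^n f_j(X_{P_j}) ≤ (p_0−ε)n] ≤ exp(−D(p_0−ε ∥ p_0)·n/k). This follows from the supermodular upper-tail bound applied to g_j = 1 − f_j, using D(1−p ∥ 1−q) = D(p ∥ q). -/
open MeasureTheory ProbabilityTheory Real Finset

namespace RKLT

variable {m : ℕ}

/-- `Φ` depends only on coordinates in `s`. -/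
def DepOnly (s : Finset (Fin m)) (Φ : (Fin m → ℝ) → ℝ) : Prop :=
  ∀ x y : Fin m → ℝ, (∀ j ∈ s, x j = y j) → Φ x = Φ y

/-- One-coordinate averaging operator. -/
noncomputable def Tq (q : ℝ) (i : Fin m) (Φ : (Fin m → ℝ) → ℝ) : (Fin m → ℝ) → ℝ :=
  fun x => (1 - q) * Φ (Function.update x i 0) + q * Φ (Function.update x i 1)

lemma binary_update {x : Fin m → ℝ} (hx : BinaryVec x) (i : Fin m) {c : ℝ}
    (hc : c = 0 ∨ c = 1) : BinaryVec (Function.update x i c) := fun j => by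
  rcases eq_or_ne j i with rfl | h
  · simpa using hc
  · simpa [Function.update_apply, h] using hx j

lemma update_le_update {x y : Fin m → ℝ} (hxy : x ≤ y) (i : Fin m) (c : ℝ) :
    Function.update x i c ≤ Function.update y i c := fun j => by
  rcases eq_or_ne j i with rfl | h
  · simp
  · simpa [Function.update_apply, h] using hxy j

lemma update_le_update' {x : Fin m → ℝ} (i : Fin m) {c d : ℝ} (hcd : c ≤ d) :
    Function.update x i c ≤ Function.update x i d := fun j => by
  rcases eq_or_ne j i with rfl | h
  · simpa using hcd
  · simp [Function.update_apply, h]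

lemma Tq_measurable {q : ℝ} {i : Fin m} {Φ : (Fin m → ℝ) → ℝ} (hΦ : Measurable Φ) :
    Measurable (Tq q i Φ) := by
  exact ((measurable_const.mul (hΦ.comp measurable_update_left)).add
    (measurable_const.mul (hΦ.comp measurable_update_left)))

lemma Tq_nonneg {q : ℝ} (hq0 : 0 ≤ q) (hq1 : q ≤ 1) {i : Fin m} {Φ : (Fin m → ℝ) → ℝ}
    (h : ∀ x, 0 ≤ Φ x) : ∀ x, 0 ≤ Tq q i Φ x := fun x =>
  add_nonneg (mul_nonneg (by linarith) (h _)) (mul_nonneg hq0 (h _))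

lemma Tq_depOnly {q : ℝ} {i : Fin m} {s : Finset (Fin m)} {Φ : (Fin m → ℝ) → ℝ}
    (h : DepOnly s Φ) : DepOnly (s.erase i) (Tq q i Φ) := by
  intro x y hxy
  have h0 : ∀ c : ℝ, Φ (Function.update x i c) = Φ (Function.update y i c) := by
    intro c
    refine h _ _ fun j hj => ?_
    rcases eq_or_ne j i with rfl | hne
    · simp
    · simp only [Function.update_apply, if_neg hne]
      exact hxy j (Finset.mem_erase.2 ⟨hne, hj⟩)
  simp [Tq, h0 0, h0 1]

lemma depOnly_mono {s t : Finset (Fin m)} {Φ : (Fin m → ℝ) → ℝ} (hst : s ⊆ t)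
    (h : DepOnly s Φ) : DepOnly t Φ := fun x y hxy => h x y fun j hj => hxy j (hst hj)

lemma Tq_supermod {q : ℝ} (hq0 : 0 ≤ q) (hq1 : q ≤ 1) {i : Fin m} {Φ : (Fin m → ℝ) → ℝ}
    (h : SupermodCube Φ) : SupermodCube (Tq q i Φ) := by
  intro i' x y hx hy hxy
  rcases eq_or_ne i' i with rfl | hne
  · simp [Tq, Function.update_idem]
  · have key : ∀ c : ℝ, c = 0 ∨ c = 1 →
        Φ (Function.update (Function.update x i' 1) i c) -
          Φ (Function.update (Function.update x i' 0) i c) ≤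
        Φ (Function.update (Function.update y i' 1) i c) -
          Φ (Function.update (Function.update y i' 0) i c) := by
      intro c hc
      have hcomm : ∀ z : Fin m → ℝ, ∀ d : ℝ,
          Function.update (Function.update z i' d) i c =
            Function.update (Function.update z i c) i' d := fun z d =>
        Function.update_comm hne.symm c d z ▸ rfl
      rw [hcomm x 1, hcomm x 0, hcomm y 1, hcomm y 0]
      exact h i' _ _ (binary_update hx i hc) (binary_update hy i hc)
        (update_le_update hxy i c)
    have k0 := key 0 (Or.inl rfl)
    have k1 := key 1 (Or.inr rfl)
    simp only [Tq]
    nlinarith [k0, k1]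


variable {Ω : Type*} [MeasurableSpace Ω] {μ : Measure Ω} [IsProbabilityMeasure μ]
variable {X : Fin m → Ω → ℝ}

/-- every function is bounded on the binary cube -/
lemma exists_cube_bound (Φ : (Fin m → ℝ) → ℝ) :
    ∃ M : ℝ, ∀ x : Fin m → ℝ, BinaryVec x → |Φ x| ≤ M := by
  classical
  refine ⟨Finset.univ.sup' ⟨fun _ => false, Finset.mem_univ _⟩
    (fun b : Fin m → Bool => |Φ (fun i => if b i then 1 else 0)|), ?_⟩
  intro x hx
  have hxe : x = fun i => if (if x i = 1 then true else false) then (1 : ℝ) else 0 := by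
    funext i; rcases hx i with h | h <;> simp [h]
  conv_lhs => rw [hxe]
  exact Finset.le_sup' (fun b : Fin m → Bool => |Φ (fun i => if b i then 1 else 0)|)
    (Finset.mem_univ (fun i => if x i = 1 then true else false))

lemma meas_comp (hX : ∀ i, Measurable (X i)) {Φ : (Fin m → ℝ) → ℝ} (hΦ : Measurable Φ) :
    Measurable fun ω => Φ (fun i => X i ω) :=
  hΦ.comp (measurable_pi_lambda _ hX)

lemma integrable_comp (hX : ∀ i, Measurable (X i)) (hbin : ∀ i ω, X i ω = 0 ∨ X i ω = 1)
    {Φ : (Fin m → ℝ) → ℝ} (hΦ : Measurable Φ) :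
    Integrable (fun ω => Φ (fun i => X i ω)) μ := by
  obtain ⟨M, hM⟩ := exists_cube_bound Φ
  refine (integrable_const M).mono' (meas_comp hX hΦ).aestronglyMeasurable ?_
  exact ae_of_all _ fun ω => by
    simpa [Real.norm_eq_abs] using hM _ (fun i => hbin i ω)

lemma binary_decomp (hbin : ∀ i ω, X i ω = 0 ∨ X i ω = 1) (i : Fin m)
    (Ψ : (Fin m → ℝ) → ℝ) (ω : Ω) :
    Ψ (fun j => X j ω) = Ψ (Function.update (fun j => X j ω) i 0) +
      X i ω * (Ψ (Function.update (fun j => X j ω) i 1) -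
        Ψ (Function.update (fun j => X j ω) i 0)) := by
  rcases hbin i ω with h | h
  · have : Function.update (fun j => X j ω) i 0 = fun j => X j ω := by
      rw [← h]; exact Function.update_eq_self i _
    rw [this, h]; ring
  · have : Function.update (fun j => X j ω) i 1 = fun j => X j ω := by
      rw [← h]; exact Function.update_eq_self i _
    rw [this, h]; ring

lemma q_mem_Icc (hX : ∀ i, Measurable (X i)) (hbin : ∀ i ω, X i ω = 0 ∨ X i ω = 1)
    (i : Fin m) : (∫ ω, X i ω ∂μ) ∈ Set.Icc (0:ℝ) 1 := by
  have hint : Integrable (X i) μ := by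
    refine (integrable_const 1).mono' (hX i).aestronglyMeasurable ?_
    exact ae_of_all _ fun ω => by rcases hbin i ω with h | h <;> simp [h]
  constructor
  · exact integral_nonneg fun ω => by rcases hbin i ω with h | h <;> simp [h]
  · have h1 : ∫ ω, X i ω ∂μ ≤ ∫ _, (1:ℝ) ∂μ := by
      refine integral_mono hint (integrable_const 1) fun ω => ?_
      rcases hbin i ω with h | h <;> simp [h]
    simpa using h1

/-- The NA one-step inequality. -/
lemma na_step (hX : ∀ i, Measurable (X i)) (hbin : ∀ i ω, X i ω = 0 ∨ X i ω = 1)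
    (hNA : OneNA μ X) (i : Fin m) {Ψ : (Fin m → ℝ) → ℝ} (hΨm : Measurable Ψ)
    (hΨsup : SupermodCube Ψ) :
    ∫ ω, Ψ (fun j => X j ω) ∂μ ≤ ∫ ω, Tq (∫ ω', X i ω' ∂μ) i Ψ (fun j => X j ω) ∂μ := by
  classical
  set q : ℝ := ∫ ω', X i ω' ∂μ with hq
  set Δ : (Fin m → ℝ) → ℝ := fun x => Ψ (Function.update x i 1) - Ψ (Function.update x i 0)
    with hΔ
  have hΔm : Measurable Δ :=
    (hΨm.comp measurable_update_left).sub (hΨm.comp measurable_update_left)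
  have hΨ0m : Measurable fun x : Fin m → ℝ => Ψ (Function.update x i 0) :=
    hΨm.comp measurable_update_left
  have hint1 : Integrable (fun ω => Ψ (Function.update (fun j => X j ω) i 0)) μ :=
    integrable_comp hX hbin hΨ0m
  have hint2 : Integrable (fun ω => X i ω * Δ (fun j => X j ω)) μ :=
    integrable_comp hX hbin ((measurable_pi_apply i).mul hΔm)
  have hintΔ : Integrable (fun ω => Δ (fun j => X j ω)) μ := integrable_comp hX hbin hΔm
  have hdecomp : (fun ω => Ψ (fun j => X j ω)) =
      fun ω => Ψ (Function.update (fun j => X j ω) i 0) + X i ω * Δ (fun j => X j ω) := by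
    funext ω; exact binary_decomp hbin i Ψ ω
  have hNAapp : ∫ ω, Δ (fun j => X j ω) * X i ω ∂μ ≤
      (∫ ω, Δ (fun j => X j ω) ∂μ) * ∫ ω, X i ω ∂μ := by
    refine hNA i Δ id hΔm ?_ ?_ measurable_id monotone_id
    · intro x y hx hy hxy
      exact hΨsup i x y hx hy hxy
    · intro x y hxy
      have h1 : Function.update x i (1:ℝ) = Function.update y i 1 := by
        funext j; rcases eq_or_ne j i with rfl | h
        · simp
        · simp [Function.update_apply, h, hxy j h]
      have h0 : Function.update x i (0:ℝ) = Function.update y i 0 := by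
        funext j; rcases eq_or_ne j i with rfl | h
        · simp
        · simp [Function.update_apply, h, hxy j h]
      simp [hΔ, h1, h0]
  have hTq : (fun ω => Tq q i Ψ (fun j => X j ω)) =
      fun ω => Ψ (Function.update (fun j => X j ω) i 0) + q * Δ (fun j => X j ω) := by
    funext ω; simp only [Tq, hΔ]; ring
  rw [hdecomp, hTq, integral_add hint1 hint2, integral_add hint1 (hintΔ.const_mul q)]
  refine add_le_add le_rfl ?_
  rw [integral_const_mul]
  calc ∫ ω, X i ω * Δ (fun j => X j ω) ∂μ
      = ∫ ω, Δ (fun j => X j ω) * X i ω ∂μ := by simp [mul_comm]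
    _ ≤ (∫ ω, Δ (fun j => X j ω) ∂μ) * ∫ ω, X i ω ∂μ := hNAapp
    _ = q * ∫ ω, Δ (fun j => X j ω) ∂μ := by rw [mul_comm, hq]

/-- The independent one-step identity. -/
lemma indep_step {Xs : Fin m → Ω → ℝ} (hXs : ∀ i, Measurable (Xs i))
    (hbins : ∀ i ω, Xs i ω = 0 ∨ Xs i ω = 1)
    (hindep : iIndepFun Xs μ) (i : Fin m)
    {Ψ : (Fin m → ℝ) → ℝ} (hΨm : Measurable Ψ) :
    ∫ ω, Ψ (fun j => Xs j ω) ∂μ = ∫ ω, Tq (∫ ω', Xs i ω' ∂μ) i Ψ (fun j => Xs j ω) ∂μ := by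
  classical
  set q : ℝ := ∫ ω', Xs i ω' ∂μ with hq
  set Δ : (Fin m → ℝ) → ℝ := fun x => Ψ (Function.update x i 1) - Ψ (Function.update x i 0)
    with hΔ
  have hΔm : Measurable Δ :=
    (hΨm.comp measurable_update_left).sub (hΨm.comp measurable_update_left)
  have hΔdep : ∀ x y : Fin m → ℝ, (∀ j, j ≠ i → x j = y j) → Δ x = Δ y := by
    intro x y hxy
    have h1 : Function.update x i (1:ℝ) = Function.update y i 1 := by
      funext j; rcases eq_or_ne j i with rfl | h
      · simp
      · simp [Function.update_apply, h, hxy j h]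
    have h0 : Function.update x i (0:ℝ) = Function.update y i 0 := by
      funext j; rcases eq_or_ne j i with rfl | h
      · simp
      · simp [Function.update_apply, h, hxy j h]
    simp [hΔ, h1, h0]
  have hΨ0m : Measurable fun x : Fin m → ℝ => Ψ (Function.update x i 0) :=
    hΨm.comp measurable_update_left
  have hint1 : Integrable (fun ω => Ψ (Function.update (fun j => Xs j ω) i 0)) μ :=
    integrable_comp hXs hbins hΨ0m
  have hint2 : Integrable (fun ω => Xs i ω * Δ (fun j => Xs j ω)) μ :=
    integrable_comp hXs hbins ((measurable_pi_apply i).mul hΔm)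
  have hintΔ : Integrable (fun ω => Δ (fun j => Xs j ω)) μ := integrable_comp hXs hbins hΔm
  have hintXi : Integrable (Xs i) μ :=
    integrable_comp hXs hbins (measurable_pi_apply i)
  have hdecomp : (fun ω => Ψ (fun j => Xs j ω)) =
      fun ω => Ψ (Function.update (fun j => Xs j ω) i 0) + Xs i ω * Δ (fun j => Xs j ω) := by
    funext ω; exact binary_decomp hbins i Ψ ω
  -- independence of Xs i and Δ(Xs)
  have hIndepΔ : IndepFun (Xs i) (fun ω => Δ (fun j => Xs j ω)) μ := by
    have hdisj : Disjoint ({i} : Finset (Fin m)) ({i}ᶜ : Finset (Fin m)) := by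
      simp [Finset.disjoint_left]
    have hbase := hindep.indepFun_finset {i} ({i}ᶜ) hdisj hXs
    have hψm : Measurable (fun v : ↥({i}ᶜ : Finset (Fin m)) → ℝ =>
        Δ (fun j => if h : j ∈ ({i}ᶜ : Finset (Fin m)) then v ⟨j, h⟩ else 0)) := by
      refine hΔm.comp (measurable_pi_lambda _ fun j => ?_)
      by_cases h : j ∈ ({i}ᶜ : Finset (Fin m))
      · simpa [h] using measurable_pi_apply (⟨j, h⟩ : ↥({i}ᶜ : Finset (Fin m)))
      · simpa [h] using measurable_const
    have hcomp := hbase.comp (φ := fun v : ↥({i} : Finset (Fin m)) → ℝ =>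
        v ⟨i, Finset.mem_singleton_self i⟩)
        (ψ := fun v : ↥({i}ᶜ : Finset (Fin m)) → ℝ =>
        Δ (fun j => if h : j ∈ ({i}ᶜ : Finset (Fin m)) then v ⟨j, h⟩ else 0))
        (measurable_pi_apply _ : Measurable fun v : ↥({i} : Finset (Fin m)) → ℝ =>
          v ⟨i, Finset.mem_singleton_self i⟩) hψm
    have hthis : IndepFun (Xs i)
        (fun ω => Δ (fun j => if h : j ∈ ({i}ᶜ : Finset (Fin m)) then Xs j ω else 0)) μ :=
      hcomp
    have heq : (fun ω => Δ (fun j => if h : j ∈ ({i}ᶜ : Finset (Fin m)) then Xs j ω else 0)) =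
        fun ω => Δ (fun j => Xs j ω) := by
      funext ω
      refine hΔdep _ _ fun j hj => ?_
      have hjmem : j ∈ ({i}ᶜ : Finset (Fin m)) := by simpa using hj
      simp [hjmem]
    rwa [heq] at hthis
  have hfact : ∫ ω, Xs i ω * Δ (fun j => Xs j ω) ∂μ = q * ∫ ω, Δ (fun j => Xs j ω) ∂μ := by
    have := hIndepΔ.integral_mul_eq_mul_integral hintXi.aestronglyMeasurable hintΔ.aestronglyMeasurable
    simpa [Pi.mul_apply, hq] using this
  have hTq : (fun ω => Tq q i Ψ (fun j => Xs j ω)) =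
      fun ω => Ψ (Function.update (fun j => Xs j ω) i 0) + q * Δ (fun j => Xs j ω) := by
    funext ω; simp only [Tq, hΔ]; ring
  rw [hdecomp, hTq, integral_add hint1 hint2, integral_add hint1 (hintΔ.const_mul q),
    hfact, integral_const_mul]

/-- iterate `Tq` along a list of coordinates -/
noncomputable def TL (q : Fin m → ℝ) : List (Fin m) → ((Fin m → ℝ) → ℝ) → ((Fin m → ℝ) → ℝ)
  | [], Φ => Φ
  | i :: L, Φ => Tq (q i) i (TL q L Φ)

lemma TL_measurable (q : Fin m → ℝ) (L : List (Fin m)) {Φ : (Fin m → ℝ) → ℝ}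
    (hΦ : Measurable Φ) : Measurable (TL q L Φ) := by
  induction L with
  | nil => exact hΦ
  | cons i L ih => exact Tq_measurable ih

lemma TL_supermod (q : Fin m → ℝ) (hq : ∀ i, q i ∈ Set.Icc (0:ℝ) 1) (L : List (Fin m))
    {Φ : (Fin m → ℝ) → ℝ} (hΦ : SupermodCube Φ) : SupermodCube (TL q L Φ) := by
  induction L with
  | nil => exact hΦ
  | cons i L ih => exact Tq_supermod (hq i).1 (hq i).2 ih

lemma TL_depOnly (q : Fin m → ℝ) (L : List (Fin m)) {s : Finset (Fin m)}
    {Φ : (Fin m → ℝ) → ℝ} (h : DepOnly s Φ) : DepOnly (s \ L.toFinset) (TL q L Φ) := by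
  induction L with
  | nil => exact depOnly_mono (by simp) h
  | cons i L ih =>
      refine depOnly_mono ?_ (Tq_depOnly ih)
      intro j hj
      have h1 := Finset.mem_erase.1 hj
      have h2 := Finset.mem_sdiff.1 h1.2
      refine Finset.mem_sdiff.2 ⟨h2.1, fun hc => ?_⟩
      rcases List.mem_toFinset.1 hc with hc'
      rcases (List.mem_cons).1 hc' with rfl | hmem
      · exact h1.1 rfl
      · exact h2.2 (List.mem_toFinset.2 hmem)

lemma na_chain (hX : ∀ i, Measurable (X i)) (hbin : ∀ i ω, X i ω = 0 ∨ X i ω = 1)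
    (hNA : OneNA μ X) (hq : ∀ i, (∫ ω, X i ω ∂μ) ∈ Set.Icc (0:ℝ) 1) (L : List (Fin m))
    {Φ : (Fin m → ℝ) → ℝ} (hΦm : Measurable Φ) (hΦsup : SupermodCube Φ) :
    ∫ ω, Φ (fun j => X j ω) ∂μ ≤
      ∫ ω, TL (fun i => ∫ ω', X i ω' ∂μ) L Φ (fun j => X j ω) ∂μ := by
  induction L with
  | nil => exact le_rfl
  | cons i L ih =>
      refine le_trans ih ?_
      exact na_step hX hbin hNA i (TL_measurable _ L hΦm)
        (TL_supermod _ hq L hΦsup)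

lemma indep_chain {Xs : Fin m → Ω → ℝ} (hXs : ∀ i, Measurable (Xs i))
    (hbins : ∀ i ω, Xs i ω = 0 ∨ Xs i ω = 1)
    (hindep : iIndepFun Xs μ)
    (q : Fin m → ℝ) (hq : ∀ i, q i = ∫ ω', Xs i ω' ∂μ) (L : List (Fin m))
    {Φ : (Fin m → ℝ) → ℝ} (hΦm : Measurable Φ) :
    ∫ ω, Φ (fun j => Xs j ω) ∂μ = ∫ ω, TL q L Φ (fun j => Xs j ω) ∂μ := by
  induction L with
  | nil => rfl
  | cons i L ih =>
      rw [ih]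
      have := indep_step hXs hbins hindep i (Ψ := TL q L Φ) (TL_measurable _ L hΦm)
      rw [this, ← hq i]
      rfl

/-- Comparison to the independent copy, for supermodular `Φ`. -/
lemma compare_indep (hX : ∀ i, Measurable (X i)) (hbin : ∀ i ω, X i ω = 0 ∨ X i ω = 1)
    (hNA : OneNA μ X) {Xs : Fin m → Ω → ℝ} (hXs : ∀ i, Measurable (Xs i))
    (hbins : ∀ i ω, Xs i ω = 0 ∨ Xs i ω = 1)
    (hindep : iIndepFun Xs μ)
    (hmarg : ∀ i, Measure.map (Xs i) μ = Measure.map (X i) μ)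
    {Φ : (Fin m → ℝ) → ℝ} (hΦm : Measurable Φ) (hΦsup : SupermodCube Φ) :
    ∫ ω, Φ (fun j => X j ω) ∂μ ≤ ∫ ω, Φ (fun j => Xs j ω) ∂μ := by
  classical
  set q : Fin m → ℝ := fun i => ∫ ω', X i ω' ∂μ with hqdef
  have hqq : ∀ i, q i = ∫ ω', Xs i ω' ∂μ := by
    intro i
    have h1 : ∫ ω', Xs i ω' ∂μ = ∫ y, y ∂(Measure.map (Xs i) μ) :=
      (integral_map (hXs i).aemeasurable aestronglyMeasurable_id).symm
    have h2 : ∫ ω', X i ω' ∂μ = ∫ y, y ∂(Measure.map (X i) μ) :=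
      (integral_map (hX i).aemeasurable aestronglyMeasurable_id).symm
    simp only [hqdef]
    rw [h2, h1, hmarg i]
  set L : List (Fin m) := List.finRange m with hL
  have hconst : ∀ x y : Fin m → ℝ, TL q L Φ x = TL q L Φ y := by
    have hdep : DepOnly (Finset.univ \ L.toFinset) (TL q L Φ) :=
      TL_depOnly q L (fun x y _ => by
        exact (fun h => h) (congrArg Φ (funext fun j => by
          exact (by assumption : ∀ j ∈ (Finset.univ : Finset (Fin m)), x j = y j) j
            (Finset.mem_univ j))))
    intro x y
    refine hdep x y fun j hj => absurd (Finset.mem_sdiff.1 hj).2 ?_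
    simp [hL, List.mem_finRange]
  have h1 : ∫ ω, Φ (fun j => X j ω) ∂μ ≤ ∫ ω, TL q L Φ (fun j => X j ω) ∂μ :=
    na_chain hX hbin hNA (fun i => q_mem_Icc hX hbin i) L hΦm hΦsup
  have h2 : ∫ ω, Φ (fun j => Xs j ω) ∂μ = ∫ ω, TL q L Φ (fun j => Xs j ω) ∂μ :=
    indep_chain hXs hbins hindep q hqq L hΦm
  have h3 : ∀ ω ω' : Ω, TL q L Φ (fun j => X j ω) = TL q L Φ (fun j => Xs j ω') :=
    fun ω ω' => hconst _ _
  rcases isEmpty_or_nonempty Ω with hΩ | hne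
  · simp [integral_of_isEmpty]
  · obtain ⟨ω0⟩ := hne
    have e1 : (fun ω => TL q L Φ (fun j => X j ω)) =
        fun _ : Ω => TL q L Φ (fun j => Xs j ω0) := funext fun ω => h3 ω ω0
    have e2 : (fun ω => TL q L Φ (fun j => Xs j ω)) =
        fun _ : Ω => TL q L Φ (fun j => Xs j ω0) := funext fun ω => hconst _ _
    rw [h2, e2, ← e1]
    exact h1


/-- AM-GM with slack. -/
lemma amgm_slack {ι : Type*} {k : ℕ} (hk : 0 < k) (S : Finset ι) (hS : S.card ≤ k)
    (t : ι → ℝ) (ht : ∀ j ∈ S, 0 ≤ t j) :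
    ∏ j ∈ S, t j ^ ((k:ℝ)⁻¹) ≤ (k:ℝ)⁻¹ * ∑ j ∈ S, t j + (1 - (S.card : ℝ) / k) := by
  rcases Finset.eq_empty_or_nonempty S with rfl | hSne
  · simp
  have hs0 : (0:ℝ) < S.card := by exact_mod_cast hSne.card_pos
  have hK : (0:ℝ) < k := by exact_mod_cast hk
  have hsk : (S.card : ℝ) ≤ k := by exact_mod_cast hS
  have hgm : ∏ j ∈ S, t j ^ ((S.card:ℝ)⁻¹) ≤ (S.card:ℝ)⁻¹ * ∑ j ∈ S, t j := by
    have h := Real.geom_mean_le_arith_mean_weighted S (fun _ => (S.card:ℝ)⁻¹) t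
      (fun _ _ => by positivity)
      (by rw [Finset.sum_const, nsmul_eq_mul]; field_simp) ht
    calc ∏ j ∈ S, t j ^ ((S.card:ℝ)⁻¹) ≤ ∑ j ∈ S, (S.card:ℝ)⁻¹ * t j := h
      _ = (S.card:ℝ)⁻¹ * ∑ j ∈ S, t j := by rw [Finset.mul_sum]
  set u : ℝ := (S.card:ℝ)⁻¹ * ∑ j ∈ S, t j with hu
  have hu0 : 0 ≤ u := mul_nonneg (by positivity) (Finset.sum_nonneg ht)
  have hθ : (0:ℝ) ≤ (S.card : ℝ) / k := by positivity
  have hθ1 : (S.card : ℝ) / k ≤ 1 := by rw [div_le_one hK]; exact hsk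
  have h2 : u ^ ((S.card:ℝ)/k) ≤ ((S.card:ℝ)/k) * u + (1 - (S.card:ℝ)/k) := by
    have h := Real.geom_mean_le_arith_mean2_weighted (w₁ := (S.card:ℝ)/k)
      (w₂ := 1 - (S.card:ℝ)/k) (p₁ := u) (p₂ := 1) hθ (by linarith) hu0 zero_le_one
      (by ring)
    simpa using h
  have hlhs : ∏ j ∈ S, t j ^ ((k:ℝ)⁻¹) = (∏ j ∈ S, t j ^ ((S.card:ℝ)⁻¹)) ^ ((S.card:ℝ)/k) := by
    rw [← Real.finset_prod_rpow S _ (fun j hj => Real.rpow_nonneg (ht j hj) _)]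
    refine Finset.prod_congr rfl fun j hj => ?_
    rw [← Real.rpow_mul (ht j hj)]
    congr 1
    field_simp
  have hmono : (∏ j ∈ S, t j ^ ((S.card:ℝ)⁻¹)) ^ ((S.card:ℝ)/k) ≤ u ^ ((S.card:ℝ)/k) :=
    Real.rpow_le_rpow (Finset.prod_nonneg fun j hj => Real.rpow_nonneg (ht j hj) _)
      hgm hθ
  have hfin : ((S.card:ℝ)/k) * u = (k:ℝ)⁻¹ * ∑ j ∈ S, t j := by
    rw [hu]; field_simp
  calc ∏ j ∈ S, t j ^ ((k:ℝ)⁻¹) = (∏ j ∈ S, t j ^ ((S.card:ℝ)⁻¹)) ^ ((S.card:ℝ)/k) := hlhs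
    _ ≤ u ^ ((S.card:ℝ)/k) := hmono
    _ ≤ ((S.card:ℝ)/k) * u + (1 - (S.card:ℝ)/k) := h2
    _ = (k:ℝ)⁻¹ * ∑ j ∈ S, t j + (1 - (S.card : ℝ)/k) := by rw [hfin]

/-- Two-point Hölder inequality for at most `k` factors. -/
lemma twopoint_holder {ι : Type*} {k : ℕ} (hk : 0 < k) {q : ℝ} (hq0 : 0 ≤ q) (hq1 : q ≤ 1)
    (S : Finset ι) (hS : S.card ≤ k) (A B : ι → ℝ)
    (hA : ∀ j ∈ S, 0 ≤ A j) (hB : ∀ j ∈ S, 0 ≤ B j) :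
    (1 - q) * ∏ j ∈ S, (A j) ^ ((k:ℝ)⁻¹) + q * ∏ j ∈ S, (B j) ^ ((k:ℝ)⁻¹) ≤
      ∏ j ∈ S, ((1 - q) * A j + q * B j) ^ ((k:ℝ)⁻¹) := by
  classical
  have hK : (0:ℝ) < k := by exact_mod_cast hk
  set C : ι → ℝ := fun j => (1 - q) * A j + q * B j with hC
  have hC0 : ∀ j ∈ S, 0 ≤ C j := fun j hj =>
    add_nonneg (mul_nonneg (by linarith) (hA j hj)) (mul_nonneg hq0 (hB j hj))
  by_cases hzero : ∃ j ∈ S, C j = 0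
  · obtain ⟨j0, hj0, hCj0⟩ := hzero
    have hrhs : ∏ j ∈ S, (C j) ^ ((k:ℝ)⁻¹) = 0 := by
      refine Finset.prod_eq_zero hj0 ?_
      rw [hCj0, Real.zero_rpow (by positivity)]
    rw [hrhs]
    have hqA : (1 - q) * A j0 = 0 ∧ q * B j0 = 0 := by
      have e1 := mul_nonneg (sub_nonneg.2 hq1) (hA j0 hj0)
      have e2 := mul_nonneg hq0 (hB j0 hj0)
      have hsum0 : (1 - q) * A j0 + q * B j0 = 0 := by simpa [hC] using hCj0
      exact ⟨by linarith, by linarith⟩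
    have h1 : (1 - q) * ∏ j ∈ S, (A j) ^ ((k:ℝ)⁻¹) ≤ 0 := by
      rcases mul_eq_zero.1 hqA.1 with h | h
      · rw [h, zero_mul]
      · rw [Finset.prod_eq_zero hj0 (by rw [h, Real.zero_rpow (by positivity)]), mul_zero]
    have h2 : q * ∏ j ∈ S, (B j) ^ ((k:ℝ)⁻¹) ≤ 0 := by
      rcases mul_eq_zero.1 hqA.2 with h | h
      · rw [h, zero_mul]
      · rw [Finset.prod_eq_zero hj0 (by rw [h, Real.zero_rpow (by positivity)]), mul_zero]
    linarith
  · push_neg at hzero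
    have hCpos : ∀ j ∈ S, 0 < C j := fun j hj => lt_of_le_of_ne (hC0 j hj)
      (Ne.symm (hzero j hj))
    have hProdC : 0 < ∏ j ∈ S, (C j) ^ ((k:ℝ)⁻¹) :=
      Finset.prod_pos fun j hj => Real.rpow_pos_of_pos (hCpos j hj) _
    -- bound each normalized product
    have key : ∀ (t : ι → ℝ), (∀ j ∈ S, 0 ≤ t j) →
        ∏ j ∈ S, (t j) ^ ((k:ℝ)⁻¹) ≤
          ((k:ℝ)⁻¹ * ∑ j ∈ S, t j / C j + (1 - (S.card:ℝ)/k)) *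
            ∏ j ∈ S, (C j) ^ ((k:ℝ)⁻¹) := by
      intro t htn
      have h := amgm_slack hk S hS (fun j => t j / C j)
        (fun j hj => div_nonneg (htn j hj) (hC0 j hj))
      have hsplit : ∏ j ∈ S, (t j / C j) ^ ((k:ℝ)⁻¹) =
          (∏ j ∈ S, (t j) ^ ((k:ℝ)⁻¹)) / ∏ j ∈ S, (C j) ^ ((k:ℝ)⁻¹) := by
        rw [← Finset.prod_div_distrib]
        exact Finset.prod_congr rfl fun j hj =>
          Real.div_rpow (htn j hj) (hC0 j hj) _
      rw [hsplit, div_le_iff₀ hProdC] at h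
      exact h
    have hsum : (1 - q) * ((k:ℝ)⁻¹ * ∑ j ∈ S, A j / C j + (1 - (S.card:ℝ)/k)) +
        q * ((k:ℝ)⁻¹ * ∑ j ∈ S, B j / C j + (1 - (S.card:ℝ)/k)) = 1 := by
      have hcomb : (1 - q) * ((k:ℝ)⁻¹ * ∑ j ∈ S, A j / C j) +
          q * ((k:ℝ)⁻¹ * ∑ j ∈ S, B j / C j) = (k:ℝ)⁻¹ * (S.card : ℝ) := by
        have : (1 - q) * ∑ j ∈ S, A j / C j + q * ∑ j ∈ S, B j / C j
            = ∑ j ∈ S, ((1 - q) * (A j / C j) + q * (B j / C j)) := by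
          rw [Finset.sum_add_distrib, Finset.mul_sum, Finset.mul_sum]
        have hone : ∀ j ∈ S, (1 - q) * (A j / C j) + q * (B j / C j) = 1 := by
          intro j hj
          have hCne : C j ≠ 0 := (hCpos j hj).ne'
          field_simp
          simp [hC]
        rw [show (1 - q) * ((k:ℝ)⁻¹ * ∑ j ∈ S, A j / C j) +
            q * ((k:ℝ)⁻¹ * ∑ j ∈ S, B j / C j) =
            (k:ℝ)⁻¹ * ((1 - q) * ∑ j ∈ S, A j / C j + q * ∑ j ∈ S, B j / C j) by ring,
          this, Finset.sum_congr rfl hone, Finset.sum_const, nsmul_eq_mul, mul_one]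
      linear_combination hcomb
    calc (1 - q) * ∏ j ∈ S, (A j) ^ ((k:ℝ)⁻¹) + q * ∏ j ∈ S, (B j) ^ ((k:ℝ)⁻¹)
        ≤ (1 - q) * (((k:ℝ)⁻¹ * ∑ j ∈ S, A j / C j + (1 - (S.card:ℝ)/k)) *
            ∏ j ∈ S, (C j) ^ ((k:ℝ)⁻¹)) +
          q * (((k:ℝ)⁻¹ * ∑ j ∈ S, B j / C j + (1 - (S.card:ℝ)/k)) *
            ∏ j ∈ S, (C j) ^ ((k:ℝ)⁻¹)) := by
          refine add_le_add ?_ ?_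
          · exact mul_le_mul_of_nonneg_left (key A hA) (by linarith)
          · exact mul_le_mul_of_nonneg_left (key B hB) hq0
      _ = ((1 - q) * ((k:ℝ)⁻¹ * ∑ j ∈ S, A j / C j + (1 - (S.card:ℝ)/k)) +
            q * ((k:ℝ)⁻¹ * ∑ j ∈ S, B j / C j + (1 - (S.card:ℝ)/k))) *
            ∏ j ∈ S, (C j) ^ ((k:ℝ)⁻¹) := by ring
      _ = ∏ j ∈ S, (C j) ^ ((k:ℝ)⁻¹) := by rw [hsum, one_mul]


lemma measurable_rpow_inv {k : ℕ} {f : (Fin m → ℝ) → ℝ} (hf : Measurable f) :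
    Measurable fun x => f x ^ ((k:ℝ)⁻¹) :=
  (Real.continuous_rpow_const (by positivity)).measurable.comp hf

/-- The read-k Hölder induction over coordinates, for an independent binary family. -/
lemma find_aux {n k : ℕ} (hk : 0 < k) {Xs : Fin m → Ω → ℝ} (hXs : ∀ i, Measurable (Xs i))
    (hbins : ∀ i ω, Xs i ω = 0 ∨ Xs i ω = 1)
    (hindep : iIndepFun Xs μ) :
    ∀ (L : List (Fin m)) (u : Fin n → (Fin m → ℝ) → ℝ) (Q : Fin n → Finset (Fin m)),
    (∀ j, Measurable (u j)) → (∀ j x, 0 ≤ u j x) →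
    (∀ j, DepOnly (Q j) (u j)) → (∀ j, Q j ⊆ L.toFinset) →
    (∀ i' : Fin m, (Finset.univ.filter fun j => i' ∈ Q j).card ≤ k) →
    ∫ ω, ∏ j, (u j (fun i' => Xs i' ω)) ^ ((k:ℝ)⁻¹) ∂μ ≤
      ∏ j, (∫ ω, u j (fun i' => Xs i' ω) ∂μ) ^ ((k:ℝ)⁻¹) := by
  classical
  intro L
  induction L with
  | nil =>
    intro u Q hum hupos hQdep hQsub hQk
    have hconst : ∀ j (x : Fin m → ℝ), u j x = u j (fun _ => 0) := fun j x =>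
      hQdep j x _ (fun l hl => ((by simpa using hQsub j hl : False)).elim)
    have hLHS : (fun ω => ∏ j, (u j (fun i' => Xs i' ω)) ^ ((k:ℝ)⁻¹)) =
        fun _ => ∏ j, (u j (fun _ => 0)) ^ ((k:ℝ)⁻¹) := by
      funext ω
      exact Finset.prod_congr rfl fun j _ => by rw [hconst j _]
    have hRHS : ∀ j, (fun ω => u j (fun i' => Xs i' ω)) = fun _ : Ω => u j (fun _ => 0) := by
      intro j; funext ω; rw [hconst j _]
    rw [hLHS, integral_const]
    simp only [probReal_univ, smul_eq_mul, one_mul]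
    refine le_of_eq (Finset.prod_congr rfl fun j _ => ?_)
    rw [hRHS j, integral_const]
    simp
  | cons i L ih =>
    intro u Q hum hupos hQdep hQsub hQk
    set q : ℝ := ∫ ω', Xs i ω' ∂μ with hqdef
    have hq01 : q ∈ Set.Icc (0:ℝ) 1 := q_mem_Icc hXs hbins i
    set S : Finset (Fin n) := Finset.univ.filter (fun j => i ∈ Q j) with hSdef
    set u' : Fin n → (Fin m → ℝ) → ℝ :=
      fun j => if i ∈ Q j then Tq q i (u j) else u j with hu'def
    have hu'm : ∀ j, Measurable (u' j) := fun j => by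
      by_cases h : i ∈ Q j
      · simpa [hu'def, h] using Tq_measurable (hum j)
      · simpa [hu'def, h] using hum j
    have hu'pos : ∀ j x, 0 ≤ u' j x := fun j x => by
      by_cases h : i ∈ Q j
      · simpa [hu'def, h] using Tq_nonneg hq01.1 hq01.2 (hupos j) x
      · simpa [hu'def, h] using hupos j x
    have hu'dep : ∀ j, DepOnly ((Q j).erase i) (u' j) := fun j => by
      by_cases h : i ∈ Q j
      · simpa [hu'def, h] using Tq_depOnly (hQdep j)
      · have he : (Q j).erase i = Q j := Finset.erase_eq_of_notMem h
        simpa [hu'def, h, he] using hQdep j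
    have hu'sub : ∀ j, (Q j).erase i ⊆ L.toFinset := fun j l hl => by
      have h1 := Finset.mem_erase.1 hl
      have h2 := hQsub j h1.2
      simp only [List.toFinset_cons, Finset.mem_insert] at h2
      rcases h2 with rfl | h2
      · exact absurd rfl h1.1
      · exact h2
    have hu'k : ∀ i' : Fin m, (Finset.univ.filter fun j => i' ∈ (Q j).erase i).card ≤ k :=
      fun i' => le_trans (Finset.card_le_card fun j hj => by
        simp only [Finset.mem_filter] at *
        exact ⟨hj.1, Finset.mem_of_mem_erase hj.2⟩) (hQk i')
    set Φ : (Fin m → ℝ) → ℝ := fun x => ∏ j, (u j x) ^ ((k:ℝ)⁻¹) with hΦdef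
    set Φ' : (Fin m → ℝ) → ℝ := fun x => ∏ j, (u' j x) ^ ((k:ℝ)⁻¹) with hΦ'def
    have hΦm : Measurable Φ :=
      Finset.measurable_prod _ fun j _ => measurable_rpow_inv (hum j)
    have hΦ'm : Measurable Φ' :=
      Finset.measurable_prod _ fun j _ => measurable_rpow_inv (hu'm j)
    have step1 : ∫ ω, Φ (fun i' => Xs i' ω) ∂μ = ∫ ω, Tq q i Φ (fun i' => Xs i' ω) ∂μ :=
      indep_step hXs hbins hindep i hΦm
    have hpoint : ∀ x : Fin m → ℝ, Tq q i Φ x ≤ Φ' x := by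
      intro x
      have hdepu : ∀ j (c : ℝ), i ∉ Q j → u j (Function.update x i c) = u j x := by
        intro j c h
        refine hQdep j _ _ fun l hl => ?_
        have : l ≠ i := fun hc => h (hc ▸ hl)
        simp [Function.update_apply, this]
      have hsplit : ∀ c : ℝ, Φ (Function.update x i c) =
          (∏ j ∈ Finset.univ.filter (fun j => i ∈ Q j),
            (u j (Function.update x i c)) ^ ((k:ℝ)⁻¹)) *
          ∏ j ∈ Finset.univ.filter (fun j => ¬ i ∈ Q j), (u j x) ^ ((k:ℝ)⁻¹) := by
        intro c
        simp only [hΦdef]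
        rw [← Finset.prod_filter_mul_prod_filter_not Finset.univ (fun j => i ∈ Q j)]
        congr 1
        exact Finset.prod_congr rfl fun j hj => by
          rw [hdepu j c (Finset.mem_filter.1 hj).2]
      have hcard : S.card ≤ k := hQk i
      have hhold := twopoint_holder hk hq01.1 hq01.2 S hcard
        (fun j => u j (Function.update x i 0)) (fun j => u j (Function.update x i 1))
        (fun j _ => hupos j _) (fun j _ => hupos j _)
      have hR : (0:ℝ) ≤ ∏ j ∈ Finset.univ.filter (fun j => ¬ i ∈ Q j), (u j x) ^ ((k:ℝ)⁻¹) :=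
        Finset.prod_nonneg fun j _ => Real.rpow_nonneg (hupos j _) _
      have hTq : Tq q i Φ x =
          ((1 - q) * ∏ j ∈ S, (u j (Function.update x i 0)) ^ ((k:ℝ)⁻¹) +
            q * ∏ j ∈ S, (u j (Function.update x i 1)) ^ ((k:ℝ)⁻¹)) *
          ∏ j ∈ Finset.univ.filter (fun j => ¬ i ∈ Q j), (u j x) ^ ((k:ℝ)⁻¹) := by
        simp only [Tq, hsplit 0, hsplit 1, hSdef]
        ring
      have hΦ'x : Φ' x =
          (∏ j ∈ S, ((1 - q) * u j (Function.update x i 0) +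
            q * u j (Function.update x i 1)) ^ ((k:ℝ)⁻¹)) *
          ∏ j ∈ Finset.univ.filter (fun j => ¬ i ∈ Q j), (u j x) ^ ((k:ℝ)⁻¹) := by
        simp only [hΦ'def]
        rw [← Finset.prod_filter_mul_prod_filter_not Finset.univ (fun j => i ∈ Q j)]
        congr 1
        · refine Finset.prod_congr rfl fun j hj => ?_
          have hmem : i ∈ Q j := (Finset.mem_filter.1 hj).2
          simp [hu'def, hmem, Tq]
        · refine Finset.prod_congr rfl fun j hj => ?_
          have hmem : ¬ i ∈ Q j := (Finset.mem_filter.1 hj).2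
          simp [hu'def, hmem]
      rw [hTq, hΦ'x]
      exact mul_le_mul_of_nonneg_right hhold hR
    have step2 : ∫ ω, Tq q i Φ (fun i' => Xs i' ω) ∂μ ≤ ∫ ω, Φ' (fun i' => Xs i' ω) ∂μ :=
      integral_mono (integrable_comp hXs hbins (Tq_measurable hΦm))
        (integrable_comp hXs hbins hΦ'm) (fun ω => hpoint _)
    have step3 := ih u' (fun j => (Q j).erase i) hu'm hu'pos hu'dep hu'sub hu'k
    have step4 : ∀ j, ∫ ω, u' j (fun i' => Xs i' ω) ∂μ = ∫ ω, u j (fun i' => Xs i' ω) ∂μ := by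
      intro j
      by_cases h : i ∈ Q j
      · have := indep_step hXs hbins hindep i (hum j)
        simp only [hu'def, if_pos h]
        rw [← this]
      · simp [hu'def, h]
    calc ∫ ω, Φ (fun i' => Xs i' ω) ∂μ
        = ∫ ω, Tq q i Φ (fun i' => Xs i' ω) ∂μ := step1
      _ ≤ ∫ ω, Φ' (fun i' => Xs i' ω) ∂μ := step2
      _ ≤ ∏ j, (∫ ω, u' j (fun i' => Xs i' ω) ∂μ) ^ ((k:ℝ)⁻¹) := step3
      _ = ∏ j, (∫ ω, u j (fun i' => Xs i' ω) ∂μ) ^ ((k:ℝ)⁻¹) :=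
        Finset.prod_congr rfl fun j _ => by rw [step4 j]


lemma mono_sum_cube {n : ℕ} (f : Fin n → (Fin m → ℝ) → ℝ) (hmono : ∀ j, MonoCube (f j)) :
    MonoCube (fun x => ∑ j, f j x) := fun x y hx hy hxy =>
  Finset.sum_le_sum fun j _ => hmono j x y hx hy hxy

lemma supermod_exp_neg {n : ℕ} (f : Fin n → (Fin m → ℝ) → ℝ)
    (hmono : ∀ j, MonoCube (f j)) (hsub : ∀ j, SubmodCube (f j)) {lam : ℝ} (hlam : 0 ≤ lam) :
    SupermodCube (fun x => Real.exp (-lam * ∑ j, f j x)) := by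
  intro i x y hx hy hxy
  set F : (Fin m → ℝ) → ℝ := fun z => ∑ j, f j z with hF
  have hFmono : MonoCube F := mono_sum_cube f hmono
  set a0 := F (Function.update x i 0) with ha0
  set a1 := F (Function.update x i 1) with ha1
  set b0 := F (Function.update y i 0) with hb0
  set b1 := F (Function.update y i 1) with hb1
  have hx0 : BinaryVec (Function.update x i 0) := binary_update hx i (Or.inl rfl)
  have hx1 : BinaryVec (Function.update x i 1) := binary_update hx i (Or.inr rfl)
  have hy0 : BinaryVec (Function.update y i 0) := binary_update hy i (Or.inl rfl)
  have hy1 : BinaryVec (Function.update y i 1) := binary_update hy i (Or.inr rfl)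
  have ha01 : a0 ≤ a1 := hFmono _ _ hx0 hx1 (update_le_update' i zero_le_one)
  have hb01 : b0 ≤ b1 := hFmono _ _ hy0 hy1 (update_le_update' i zero_le_one)
  have h00 : a0 ≤ b0 := hFmono _ _ hx0 hy0 (update_le_update hxy i 0)
  have hsubF : b1 - b0 ≤ a1 - a0 := by
    have h := Finset.sum_le_sum (f := fun j => f j (Function.update y i 1) -
        f j (Function.update y i 0))
      (g := fun j => f j (Function.update x i 1) - f j (Function.update x i 0))
      (fun j (_ : j ∈ Finset.univ) => hsub j i x y hx hy hxy)
    rw [Finset.sum_sub_distrib, Finset.sum_sub_distrib] at h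
    exact h
  show Real.exp (-lam * a1) - Real.exp (-lam * a0) ≤
    Real.exp (-lam * b1) - Real.exp (-lam * b0)
  have e1 : Real.exp (-lam * a1) = Real.exp (-lam * a0) * Real.exp (-lam * (a1 - a0)) := by
    rw [← Real.exp_add]; ring_nf
  have e2 : Real.exp (-lam * b1) = Real.exp (-lam * b0) * Real.exp (-lam * (b1 - b0)) := by
    rw [← Real.exp_add]; ring_nf
  have f1 : Real.exp (-lam * b0) ≤ Real.exp (-lam * a0) :=
    Real.exp_le_exp.2 (by nlinarith)
  have f2 : Real.exp (-lam * (a1 - a0)) ≤ Real.exp (-lam * (b1 - b0)) :=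
    Real.exp_le_exp.2 (by nlinarith)
  have f3 : Real.exp (-lam * (b1 - b0)) ≤ 1 := by
    rw [Real.exp_le_one_iff]; nlinarith
  have keyq : Real.exp (-lam * b0) * (1 - Real.exp (-lam * (b1 - b0))) ≤
      Real.exp (-lam * a0) * (1 - Real.exp (-lam * (a1 - a0))) :=
    mul_le_mul f1 (by linarith) (by linarith) (Real.exp_pos _).le
  rw [e1, e2]
  nlinarith [keyq]

/-- Master MGF bound. -/
lemma master {n k : ℕ} (hk : 0 < k)
    (hX : ∀ i, Measurable (X i)) (hbin : ∀ i ω, X i ω = 0 ∨ X i ω = 1)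
    (hNA : OneNA μ X) {Xs : Fin m → Ω → ℝ} (hXs : ∀ i, Measurable (Xs i))
    (hbins : ∀ i ω, Xs i ω = 0 ∨ Xs i ω = 1)
    (hindep : iIndepFun Xs μ)
    (hmarg : ∀ i, Measure.map (Xs i) μ = Measure.map (X i) μ)
    (P : Fin n → Finset (Fin m))
    (hread : ∀ i : Fin m, (Finset.univ.filter fun j => i ∈ P j).card ≤ k)
    (f : Fin n → (Fin m → ℝ) → ℝ) (hfmeas : ∀ j, Measurable (f j))
    (hdep : ∀ j (x y : Fin m → ℝ), (∀ i ∈ P j, x i = y i) → f j x = f j y)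
    (hmono : ∀ j, MonoCube (f j)) (hsub : ∀ j, SubmodCube (f j))
    {lam : ℝ} (hlam : 0 ≤ lam) :
    ∫ ω, Real.exp (-lam * ∑ j, f j (fun i => X i ω)) ∂μ ≤
      ∏ j, (∫ ω, Real.exp (-(lam * k) * f j (fun i => Xs i ω)) ∂μ) ^ ((k:ℝ)⁻¹) := by
  classical
  have hkR : (0:ℝ) < k := by exact_mod_cast hk
  set Φ : (Fin m → ℝ) → ℝ := fun x => Real.exp (-lam * ∑ j, f j x) with hΦdef
  have hΦm : Measurable Φ :=
    Real.measurable_exp.comp (measurable_const.mul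
      (Finset.measurable_sum _ fun j _ => hfmeas j))
  have h1 : ∫ ω, Φ (fun i => X i ω) ∂μ ≤ ∫ ω, Φ (fun i => Xs i ω) ∂μ :=
    compare_indep hX hbin hNA hXs hbins hindep hmarg hΦm
      (supermod_exp_neg f hmono hsub hlam)
  set u : Fin n → (Fin m → ℝ) → ℝ := fun j x => Real.exp (-(lam * k) * f j x) with hudef
  have hueq : ∀ x, Φ x = ∏ j, (u j x) ^ ((k:ℝ)⁻¹) := by
    intro x
    rw [hΦdef]
    simp only
    rw [show -lam * ∑ j, f j x = ∑ j, (-lam * f j x) by rw [Finset.mul_sum],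
      Real.exp_sum]
    refine Finset.prod_congr rfl fun j _ => ?_
    have harg : (-(lam * k) * f j x) * (k:ℝ)⁻¹ = -lam * f j x := by
      field_simp
    rw [hudef]
    simp only
    rw [← Real.exp_mul, harg]
  have h2 := find_aux (n := n) hk hXs hbins hindep (List.finRange m) u P
    (fun j => Real.measurable_exp.comp (measurable_const.mul (hfmeas j)))
    (fun j x => (Real.exp_pos _).le)
    (fun j x y hxy => by rw [hudef]; simp only; rw [hdep j x y hxy])
    (fun j l _ => by simp [List.mem_toFinset, List.mem_finRange])
    hread
  calc ∫ ω, Φ (fun i => X i ω) ∂μ ≤ ∫ ω, Φ (fun i => Xs i ω) ∂μ := h1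
    _ = ∫ ω, ∏ j, (u j (fun i => Xs i ω)) ^ ((k:ℝ)⁻¹) ∂μ := by
        exact integral_congr_ae (ae_of_all _ fun ω => hueq (fun i => Xs i ω))
    _ ≤ ∏ j, (∫ ω, u j (fun i => Xs i ω) ∂μ) ^ ((k:ℝ)⁻¹) := h2


end RKLT

open RKLT

/-- Lower-tail read-k bound for monotone submodular functions of binary
1-negatively associated random variables. -/
theorem read_k_lower_tail_submodular {Ω : Type*} [MeasurableSpace Ω] (μ : Measure Ω)
    [IsProbabilityMeasure μ] {m n k : ℕ} (hn : 0 < n) (hk : 0 < k)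
    (X Xstar : Fin m → Ω → ℝ)
    (hX : ∀ i, Measurable (X i)) (hbin : ∀ i ω, X i ω = 0 ∨ X i ω = 1)
    (hNA : OneNA μ X)
    (hXstar : ∀ i, Measurable (Xstar i)) (hbinstar : ∀ i ω, Xstar i ω = 0 ∨ Xstar i ω = 1)
    (hindep : iIndepFun Xstar μ)
    (hmarg : ∀ i, Measure.map (Xstar i) μ = Measure.map (X i) μ)
    (P : Fin n → Finset (Fin m))
    (hread : ∀ i : Fin m, (Finset.univ.filter fun j => i ∈ P j).card ≤ k)
    (f : Fin n → (Fin m → ℝ) → ℝ) (hfmeas : ∀ j, Measurable (f j))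
    (hdep : ∀ j (x y : Fin m → ℝ), (∀ i ∈ P j, x i = y i) → f j x = f j y)
    (hrange : ∀ j (x : Fin m → ℝ), BinaryVec x → f j x ∈ Set.Icc (0 : ℝ) 1)
    (hmono : ∀ j, MonoCube (f j)) (hsub : ∀ j, SubmodCube (f j))
    (p0 : ℝ) (hp0 : p0 = (1 / n : ℝ) * ∑ j, ∫ ω, f j (fun i => Xstar i ω) ∂μ)
    (ε : ℝ) (hε : 0 < ε) (hεle : 0 ≤ p0 - ε) :
    (μ {ω | ∑ j, f j (fun i => X i ω) ≤ (p0 - ε) * n}).toReal ≤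
      Real.exp (-(klBin (p0 - ε) p0) * n / k) := by
  classical
  have hkR : (0:ℝ) < k := by exact_mod_cast hk
  have hnR : (0:ℝ) < n := by exact_mod_cast hn
  set t : ℝ := p0 - ε with ht
  set qs : Fin n → ℝ := fun j => ∫ ω, f j (fun i => Xstar i ω) ∂μ with hqs
  have hfint : ∀ j, Integrable (fun ω => f j (fun i => Xstar i ω)) μ := fun j =>
    integrable_comp hXstar hbinstar (hfmeas j)
  have hqs01 : ∀ j, qs j ∈ Set.Icc (0:ℝ) 1 := by
    intro j
    constructor
    · exact integral_nonneg fun ω => (hrange j _ (fun i => hbinstar i ω)).1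
    · have h1 : qs j ≤ ∫ _, (1:ℝ) ∂μ :=
        integral_mono (hfint j) (integrable_const 1)
          (fun ω => (hrange j _ (fun i => hbinstar i ω)).2)
      simpa using h1
  have hsum_qs : ∑ j, qs j = p0 * n := by
    rw [hp0]; field_simp
  have hp0mem : p0 ∈ Set.Icc (0:ℝ) 1 := by
    constructor
    · rw [hp0]
      exact mul_nonneg (by positivity) (Finset.sum_nonneg fun j _ => (hqs01 j).1)
    · rw [hp0]
      have hs : ∑ j, qs j ≤ (n:ℝ) := by
        calc ∑ j, qs j ≤ ∑ _j : Fin n, (1:ℝ) := Finset.sum_le_sum fun j _ => (hqs01 j).2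
          _ = n := by simp
      rw [div_mul_eq_mul_div, one_mul, div_le_one hnR]
      exact hs
  have hp0pos : 0 < p0 := by linarith
  have ht0 : 0 ≤ t := hεle
  have htlt : t < p0 := by simp only [ht]; linarith
  have ht1 : t < 1 := lt_of_lt_of_le htlt hp0mem.2
  -- the key Chernoff bound for every nonnegative lam
  have key : ∀ lam : ℝ, 0 ≤ lam →
      (μ {ω | ∑ j, f j (fun i => X i ω) ≤ t * n}).toReal ≤
        Real.exp (lam * (t * n)) *
          (1 - p0 + p0 * Real.exp (-(lam * k))) ^ ((n:ℝ)/(k:ℝ)) := by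
    intro lam hlam
    set cA : ℝ := Real.exp (-(lam * k)) with hcA
    set AA : ℝ := 1 - p0 + p0 * cA with hAA
    have hcA0 : 0 < cA := Real.exp_pos _
    have hAA0 : 0 ≤ AA := by
      rw [hAA]
      have := hp0mem.1; have := hp0mem.2
      nlinarith [hcA0.le]
    set G : Ω → ℝ := fun ω => Real.exp (-lam * ∑ j, f j (fun i => X i ω)) with hG
    have hFm : Measurable fun x : Fin m → ℝ => Real.exp (-lam * ∑ j, f j x) :=
      Real.measurable_exp.comp (measurable_const.mul
        (Finset.measurable_sum _ fun j _ => hfmeas j))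
    have hGint : Integrable G μ := integrable_comp hX hbin hFm
    have hGpos : 0 ≤ᵐ[μ] G := ae_of_all _ fun ω => (Real.exp_pos _).le
    set eps0 : ℝ := Real.exp (-(lam * (t * n))) with heps0
    have markov := mul_meas_ge_le_integral_of_nonneg hGpos hGint eps0
    have hsubset : {ω | ∑ j, f j (fun i => X i ω) ≤ t * n} ⊆ {ω | eps0 ≤ G ω} := by
      intro ω hω
      simp only [Set.mem_setOf_eq] at hω ⊢
      rw [heps0, hG]
      refine Real.exp_le_exp.2 ?_
      have := mul_le_mul_of_nonneg_left hω hlam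
      nlinarith [this]
    have hmono' : (μ {ω | ∑ j, f j (fun i => X i ω) ≤ t * n}).toReal ≤
        (μ {ω | eps0 ≤ G ω}).toReal :=
      ENNReal.toReal_mono (measure_ne_top μ _) (measure_mono hsubset)
    have step1 : (μ {ω | ∑ j, f j (fun i => X i ω) ≤ t * n}).toReal ≤
        Real.exp (lam * (t * n)) * ∫ ω, G ω ∂μ := by
      have h2 : (μ {ω | eps0 ≤ G ω}).toReal ≤ Real.exp (lam * (t * n)) * ∫ ω, G ω ∂μ := by
        have hE : Real.exp (lam * (t * n)) * Real.exp (-(lam * (t * n))) = 1 := by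
          rw [← Real.exp_add]; simp
        have hstep : (μ {ω | eps0 ≤ G ω}).toReal =
            Real.exp (lam * (t * n)) * (eps0 * (μ {ω | eps0 ≤ G ω}).toReal) := by
          rw [heps0, ← mul_assoc (Real.exp (lam * (t * n))), hE, one_mul]
        rw [hstep]
        exact mul_le_mul_of_nonneg_left markov (Real.exp_pos _).le
      exact le_trans hmono' h2
    have hmaster := master hk hX hbin hNA hXstar hbinstar hindep hmarg P hread f hfmeas
      hdep hmono hsub hlam
    -- convexity bound on each factor
    set zz : Fin n → ℝ := fun j => 1 - qs j + qs j * cA with hzz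
    have hzz0 : ∀ j, 0 ≤ zz j := fun j => by
      simp only [hzz]
      have h1 := (hqs01 j).1; have h2 := (hqs01 j).2
      nlinarith [hcA0.le]
    have hconv : ∀ j, ∫ ω, Real.exp (-(lam * k) * f j (fun i => Xstar i ω)) ∂μ ≤ zz j := by
      intro j
      have hptw : ∀ ω, Real.exp (-(lam * k) * f j (fun i => Xstar i ω)) ≤
          1 - f j (fun i => Xstar i ω) + f j (fun i => Xstar i ω) * cA := by
        intro ω
        set s : ℝ := f j (fun i => Xstar i ω) with hs
        have hsm := hrange j _ (fun i => hbinstar i ω)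
        have hcx := convexOn_exp.2 (Set.mem_univ (0:ℝ)) (Set.mem_univ (-(lam * (k:ℝ))))
          (by linarith [hsm.2] : (0:ℝ) ≤ 1 - s) hsm.1 (by ring)
        simp only [smul_eq_mul, mul_zero, Real.exp_zero, mul_one, zero_add] at hcx
        calc Real.exp (-(lam * k) * s) = Real.exp (s * -(lam * k)) := by rw [mul_comm]
          _ ≤ (1 - s) + s * Real.exp (-(lam * k)) := hcx
          _ = 1 - s + s * cA := by rw [hcA]
      have hint1 : Integrable (fun ω => Real.exp (-(lam * k) * f j (fun i => Xstar i ω))) μ :=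
        integrable_comp hXstar hbinstar
          (Real.measurable_exp.comp (measurable_const.mul (hfmeas j)))
      have hint2 : Integrable (fun ω => 1 - f j (fun i => Xstar i ω) +
          f j (fun i => Xstar i ω) * cA) μ :=
        (((integrable_const 1).sub (hfint j)).add ((hfint j).mul_const cA))
      calc ∫ ω, Real.exp (-(lam * k) * f j (fun i => Xstar i ω)) ∂μ
          ≤ ∫ ω, (1 - f j (fun i => Xstar i ω) + f j (fun i => Xstar i ω) * cA) ∂μ :=
            integral_mono hint1 hint2 hptw
        _ = ∫ ω, (1 + (cA - 1) * f j (fun i => Xstar i ω)) ∂μ := by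
            refine integral_congr_ae (ae_of_all _ fun ω => ?_); ring
        _ = zz j := by
            rw [integral_add (integrable_const 1) ((hfint j).const_mul (cA - 1)),
              MeasureTheory.integral_const_mul]
            simp only [hzz, hqs, integral_const, probReal_univ,
              smul_eq_mul, one_mul]
            ring
    -- AM-GM step
    have hsumz : ∑ j, zz j = n * AA := by
      simp only [hzz]
      rw [Finset.sum_add_distrib, Finset.sum_sub_distrib, ← Finset.sum_mul, hsum_qs]
      simp only [Finset.sum_const, Finset.card_univ, Fintype.card_fin, nsmul_eq_mul, mul_one]
      rw [hAA]; ring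
    have hgm : ∏ j, (zz j) ^ ((n:ℝ)⁻¹) ≤ AA := by
      have h := Real.geom_mean_le_arith_mean_weighted Finset.univ (fun _ => (n:ℝ)⁻¹) zz
        (fun _ _ => by positivity)
        (by simp only [Finset.sum_const, Finset.card_univ, Fintype.card_fin, nsmul_eq_mul]
            field_simp)
        (fun j _ => hzz0 j)
      calc ∏ j, (zz j) ^ ((n:ℝ)⁻¹) ≤ ∑ j, (n:ℝ)⁻¹ * zz j := h
        _ = (n:ℝ)⁻¹ * ∑ j, zz j := by rw [Finset.mul_sum]
        _ = AA := by rw [hsumz]; field_simp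
    have hprodz : ∏ j, zz j ≤ AA ^ n := by
      calc ∏ j, zz j = ∏ j, ((zz j ^ ((n:ℝ)⁻¹)) ^ n) :=
            Finset.prod_congr rfl fun j _ =>
              (Real.rpow_inv_natCast_pow (hzz0 j) hn.ne').symm
        _ = (∏ j, zz j ^ ((n:ℝ)⁻¹)) ^ n := Finset.prod_pow _ _ _
        _ ≤ AA ^ n := pow_le_pow_left₀
            (Finset.prod_nonneg fun j _ => Real.rpow_nonneg (hzz0 j) _) hgm n
    -- assemble
    calc (μ {ω | ∑ j, f j (fun i => X i ω) ≤ t * n}).toReal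
        ≤ Real.exp (lam * (t * n)) * ∫ ω, G ω ∂μ := step1
      _ ≤ Real.exp (lam * (t * n)) *
          ∏ j, (∫ ω, Real.exp (-(lam * k) * f j (fun i => Xstar i ω)) ∂μ) ^ ((k:ℝ)⁻¹) := by
          refine mul_le_mul_of_nonneg_left ?_ (Real.exp_pos _).le
          simpa [hG] using hmaster
      _ ≤ Real.exp (lam * (t * n)) * ∏ j, (zz j) ^ ((k:ℝ)⁻¹) := by
          refine mul_le_mul_of_nonneg_left ?_ (Real.exp_pos _).le
          refine Finset.prod_le_prod (fun j _ => Real.rpow_nonneg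
            (integral_nonneg fun ω => (Real.exp_pos _).le) _) fun j _ => ?_
          exact Real.rpow_le_rpow (integral_nonneg fun ω => (Real.exp_pos _).le)
            (hconv j) (by positivity)
      _ = Real.exp (lam * (t * n)) * (∏ j, zz j) ^ ((k:ℝ)⁻¹) := by
          rw [Real.finset_prod_rpow Finset.univ zz (fun j _ => hzz0 j)]
      _ ≤ Real.exp (lam * (t * n)) * (AA ^ n) ^ ((k:ℝ)⁻¹) := by
          refine mul_le_mul_of_nonneg_left ?_ (Real.exp_pos _).le
          exact Real.rpow_le_rpow (Finset.prod_nonneg fun j _ => hzz0 j) hprodz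
            (by positivity)
      _ = Real.exp (lam * (t * n)) * AA ^ ((n:ℝ)/(k:ℝ)) := by
          rw [← Real.rpow_natCast AA n, ← Real.rpow_mul hAA0, div_eq_mul_inv]
  -- endgame
  rcases eq_or_lt_of_le hp0mem.2 with hp1 | hp1
  · -- p0 = 1 : trivial bound
    have hkl : klBin t p0 = t * Real.log t := by
      rw [klBin, hp1]
      simp
    have hle1 : (μ {ω | ∑ j, f j (fun i => X i ω) ≤ t * n}).toReal ≤ 1 := by
      have h := ENNReal.toReal_mono (by simp) (prob_le_one
        (μ := μ) (s := {ω | ∑ j, f j (fun i => X i ω) ≤ t * n}))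
      simpa using h
    refine le_trans hle1 ?_
    rw [hkl]
    have hklnp : t * Real.log t ≤ 0 :=
      mul_nonpos_iff.2 (Or.inl ⟨ht0, Real.log_nonpos ht0 ht1.le⟩)
    calc (1:ℝ) = Real.exp 0 := Real.exp_zero.symm
      _ ≤ _ := Real.exp_le_exp.2
        (div_nonneg (mul_nonneg (neg_nonneg.2 hklnp) hnR.le) hkR.le)
  · -- p0 < 1
    have h1p0 : 0 < 1 - p0 := by linarith
    have h1t : 0 < 1 - t := by linarith
    rcases eq_or_lt_of_le ht0 with ht0' | htpos
    · -- t = 0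
      have hkl : klBin t p0 = - Real.log (1 - p0) := by
        rw [klBin, ← ht0']
        simp [Real.log_inv]
      rw [hkl]
      have hRHS : Real.exp (-(- Real.log (1 - p0)) * n / k) = (1 - p0) ^ ((n:ℝ)/(k:ℝ)) := by
        rw [Real.rpow_def_of_pos h1p0]
        congr 1
        ring
      rw [hRHS]
      -- limit as δ → 0⁺
      have hbound : ∀ δ : ℝ, δ ∈ Set.Ioc (0:ℝ) 1 →
          (μ {ω | ∑ j, f j (fun i => X i ω) ≤ t * n}).toReal ≤
            (1 - p0 + p0 * δ) ^ ((n:ℝ)/(k:ℝ)) := by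
        intro δ hδ
        have hlam0 : 0 ≤ -Real.log δ / (k:ℝ) :=
          div_nonneg (neg_nonneg.2 (Real.log_nonpos hδ.1.le hδ.2)) hkR.le
        have h := key (-Real.log δ / (k:ℝ)) hlam0
        have hexpδ : Real.exp (-((-Real.log δ / (k:ℝ)) * k)) = δ := by
          rw [show -((-Real.log δ / (k:ℝ)) * k) = Real.log δ by field_simp]
          exact Real.exp_log hδ.1
        rw [hexpδ] at h
        have hone : Real.exp ((-Real.log δ / (k:ℝ)) * (t * n)) = 1 := by
          rw [← ht0']; simp
        rw [hone, one_mul] at h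
        exact h
      have htend : Filter.Tendsto (fun δ : ℝ => (1 - p0 + p0 * δ) ^ ((n:ℝ)/(k:ℝ)))
          (nhdsWithin 0 (Set.Ioi 0)) (nhds ((1 - p0) ^ ((n:ℝ)/(k:ℝ)))) := by
        have hcont : ContinuousAt (fun δ : ℝ => (1 - p0 + p0 * δ) ^ ((n:ℝ)/(k:ℝ))) 0 := by
          refine ContinuousAt.rpow_const ?_ (Or.inr (by positivity))
          exact (continuous_const.add (continuous_const.mul continuous_id)).continuousAt
        have h0 : (fun δ : ℝ => (1 - p0 + p0 * δ) ^ ((n:ℝ)/(k:ℝ))) 0 =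
            (1 - p0) ^ ((n:ℝ)/(k:ℝ)) := by norm_num
        exact h0 ▸ hcont.tendsto.mono_left nhdsWithin_le_nhds
      refine ge_of_tendsto htend ?_
      filter_upwards [Ioc_mem_nhdsGT_of_mem (Set.mem_Ico.2 ⟨le_refl 0, zero_lt_one⟩)]
        with δ hδ using hbound δ hδ
    · -- 0 < t : optimal lam
      set cstar : ℝ := t * (1 - p0) / (p0 * (1 - t)) with hcstar
      have hden : 0 < p0 * (1 - t) := mul_pos hp0pos h1t
      have hc0 : 0 < cstar := by
        rw [hcstar]; positivity
      have hc1 : cstar ≤ 1 := by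
        rw [hcstar, div_le_one hden]; nlinarith
      set lam : ℝ := -Real.log cstar / (k:ℝ) with hlamdef
      have hlam0 : 0 ≤ lam :=
        div_nonneg (neg_nonneg.2 (Real.log_nonpos hc0.le hc1)) hkR.le
      have h := key lam hlam0
      have hexpc : Real.exp (-(lam * k)) = cstar := by
        rw [show -(lam * k) = Real.log cstar by rw [hlamdef]; field_simp]
        exact Real.exp_log hc0
      have hAval : 1 - p0 + p0 * cstar = (1 - p0) / (1 - t) := by
        rw [hcstar]
        field_simp
        ring
      rw [hexpc, hAval] at h
      have hApos : 0 < (1 - p0) / (1 - t) := by positivity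
      have hexpand : Real.exp (lam * (t * n)) * ((1 - p0) / (1 - t)) ^ ((n:ℝ)/(k:ℝ)) =
          Real.exp (lam * (t * n) + Real.log ((1 - p0)/(1 - t)) * ((n:ℝ)/(k:ℝ))) := by
        rw [Real.exp_add, Real.rpow_def_of_pos hApos]
      have hexpeq : lam * (t * n) + Real.log ((1 - p0)/(1 - t)) * ((n:ℝ)/(k:ℝ)) =
          -(klBin t p0) * n / k := by
        have hlogc : Real.log cstar =
            Real.log t + Real.log (1 - p0) - Real.log p0 - Real.log (1 - t) := by
          rw [hcstar, Real.log_div (by positivity) (by positivity),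
            Real.log_mul (ne_of_gt htpos) (ne_of_gt h1p0),
            Real.log_mul (ne_of_gt hp0pos) (ne_of_gt h1t)]
          ring
        have hlogA : Real.log ((1 - p0)/(1 - t)) = Real.log (1 - p0) - Real.log (1 - t) :=
          Real.log_div (ne_of_gt h1p0) (ne_of_gt h1t)
        have hkl : klBin t p0 = t * (Real.log t - Real.log p0) +
            (1 - t) * (Real.log (1 - t) - Real.log (1 - p0)) := by
          rw [klBin, Real.log_div (ne_of_gt htpos) (ne_of_gt hp0pos),
            Real.log_div (ne_of_gt h1t) (ne_of_gt h1p0)]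
        rw [hlogA, hkl, hlamdef, hlogc]
        field_simp
        ring
      rw [hexpand, hexpeq] at h
      exact h
end
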